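/- arXiv:1002.0921 — 5 statements merged into one kernel-verified Lean document; each statement's English description precedes it below -/
import Mathlib

section
/- Let S be a d-dimensional polyhedron in ℝ^d with S = {x ∈ ℝ^d : q_1(x) ≥ 0, …, q_m(x) ≥ 0} for real polynomials q_1, …, q_m in d variables, and let F be a nonempty face of S of dimension f. Then at least d − f of the polynomials q_1, …, q_m vanish identically on F; in particular, m ≥ d − f. -/
open MvPolynomial Filter

/-- Evaluation of a `d`-variate real polynomial at a point of `ℝ^d`. -/
noncomputable def pev {d : ℕ} (p : MvPolynomial (Fin d) ℝ) (x : EuclideanSpace ℝ (Fin d)) : ℝ :=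
  MvPolynomial.eval (fun i => x i) p

/-- A basic closed semialgebraic set in `ℝ^d`. -/
def IsBasicClosed {d : ℕ} (S : Set (EuclideanSpace ℝ (Fin d))) : Prop :=
  ∃ (k : ℕ) (q : Fin k → MvPolynomial (Fin d) ℝ), S = {x | ∀ i, 0 ≤ pev (q i) x}

/-- A closed semialgebraic set: a finite union of basic closed semialgebraic sets. -/
def IsClosedSemialg {d : ℕ} (S : Set (EuclideanSpace ℝ (Fin d))) : Prop :=
  ∃ (n : ℕ) (F : Fin n → Set (EuclideanSpace ℝ (Fin d))),
    (∀ i, IsBasicClosed (F i)) ∧ S = ⋃ i, F i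

/-- A polyhedron in `ℝ^d`: an intersection of finitely many closed affine halfspaces. -/
def IsPolyhedron {d : ℕ} (S : Set (EuclideanSpace ℝ (Fin d))) : Prop :=
  ∃ (k : ℕ) (l : Fin k → (EuclideanSpace ℝ (Fin d) →ᵃ[ℝ] ℝ)), S = {x | ∀ i, 0 ≤ l i x}

/-- A face of a polyhedron `S`: either `S` itself, or `S ∩ {ℓ = 0}` for an affine
function `ℓ` that is nonnegative on `S`. -/
def IsFace {d : ℕ} (S F : Set (EuclideanSpace ℝ (Fin d))) : Prop :=
  F = S ∨ ∃ ℓ : EuclideanSpace ℝ (Fin d) →ᵃ[ℝ] ℝ,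
    (∀ x ∈ S, 0 ≤ ℓ x) ∧ F = {x ∈ S | ℓ x = 0}

/-- The dimension of a subset of `ℝ^d`: the dimension of its affine hull. -/
noncomputable def sDim {d : ℕ} (F : Set (EuclideanSpace ℝ (Fin d))) : ℕ :=
  Module.finrank ℝ (affineSpan ℝ F).direction

abbrev ES (d : ℕ) := EuclideanSpace ℝ (Fin d)

lemma pev_continuous (q : MvPolynomial (Fin d) ℝ) : Continuous (pev q) := by
  have h1 : Continuous fun (x : ES d) => (fun i => x i : Fin d → ℝ) :=
    continuous_pi fun i => (EuclideanSpace.proj (𝕜 := ℝ) i).continuous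
  exact (MvPolynomial.continuous_eval q).comp h1

lemma aeval_line (u x : ES d) (q : MvPolynomial (Fin d) ℝ) (t : ℝ) :
    Polynomial.eval t
      (MvPolynomial.aeval
        (fun i => Polynomial.C (u i) + Polynomial.C (x i - u i) * Polynomial.X) q) =
      pev q (t • (x - u) + u) := by
  have coord : ∀ i, (t • (x - u) + u) i = u i + (x i - u i) * t := by
    intro i
    simp [PiLp.add_apply, PiLp.smul_apply, PiLp.sub_apply, smul_eq_mul]
    ring
  induction q using MvPolynomial.induction_on with
  | C a => simp [pev]
  | add p r hp hr => simp only [map_add, Polynomial.eval_add, pev] at *; rw [hp, hr]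
  | mul_X p i hp =>
      simp only [map_mul, MvPolynomial.aeval_X, Polynomial.eval_mul, pev,
        Polynomial.eval_add, Polynomial.eval_C, Polynomial.eval_X, MvPolynomial.eval_mul,
        MvPolynomial.eval_X] at *
      rw [hp, coord]

lemma pev_segment (q : MvPolynomial (Fin d) ℝ) (u x : ES d) (ε : ℝ) (hε : 0 < ε)
    (h : ∀ t : ℝ, t ∈ Set.Ioo (0:ℝ) ε → pev q (t • (x - u) + u) = 0) : pev q x = 0 := by
  set g : Polynomial ℝ :=
    MvPolynomial.aeval (fun i => Polynomial.C (u i) + Polynomial.C (x i - u i) * Polynomial.X) q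
    with hg
  have hg0 : g = 0 := by
    apply Polynomial.eq_zero_of_infinite_isRoot
    apply Set.Infinite.mono (s := Set.Ioo (0:ℝ) ε)
    · intro t ht
      simp only [Set.mem_setOf_eq, Polynomial.IsRoot, hg, aeval_line, h t ht]
    · exact Set.Ioo_infinite hε
  have h1 := aeval_line u x q 1
  rw [← hg, hg0] at h1
  simp only [Polynomial.eval_zero] at h1
  simpa using h1.symm

lemma pev_zero_on_span (q : MvPolynomial (Fin d) ℝ) (A : AffineSubspace ℝ (ES d)) (u : ES d)
    (hu : u ∈ A) (ε : ℝ) (hε : 0 < ε)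
    (h : ∀ y ∈ A, dist y u < ε → pev q y = 0) : ∀ x ∈ A, pev q x = 0 := by
  intro x hx
  apply pev_segment q u x (ε / (dist x u + 1))
  · positivity
  · intro t ht
    obtain ⟨ht0, ht1⟩ := ht
    have hmem : t • (x - u) + u ∈ A := by
      have := A.smul_vsub_vadd_mem t hx hu hu
      simpa [vsub_eq_sub, vadd_eq_add] using this
    apply h _ hmem
    have : dist (t • (x - u) + u) u = t * dist x u := by
      simp [dist_eq_norm, norm_smul, abs_of_pos ht0, dist_eq_norm]
    rw [this]
    have hd : (0:ℝ) ≤ dist x u := dist_nonneg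
    calc t * dist x u ≤ t * (dist x u + 1) := by nlinarith
    _ < ε / (dist x u + 1) * (dist x u + 1) := by
        apply mul_lt_mul_of_pos_right ht1; linarith
    _ = ε := by field_simp

/-- `x` is in the relative interior of `s` (metric form). -/
def relpt {d : ℕ} (s : Set (ES d)) (x : ES d) : Prop :=
  x ∈ s ∧ ∃ ε > (0:ℝ), ∀ y ∈ affineSpan ℝ s, dist y x < ε → y ∈ s

lemma relpt_exists {d : ℕ} {s : Set (ES d)} (hconv : Convex ℝ s) (hne : s.Nonempty) :
    ∃ x, relpt s x := by
  obtain ⟨x, hx⟩ := Set.Nonempty.intrinsicInterior hconv hne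
  refine ⟨x, intrinsicInterior_subset hx, ?_⟩
  rw [intrinsicInterior] at hx
  obtain ⟨y, hy, rfl⟩ := hx
  obtain ⟨ε, hε, hball⟩ := Metric.mem_nhds_iff.mp (mem_interior_iff_mem_nhds.mp hy)
  refine ⟨ε, hε, fun z hz hdist => ?_⟩
  have : (⟨z, hz⟩ : affineSpan ℝ s) ∈ Metric.ball y ε := by
    rw [Metric.mem_ball, Subtype.dist_eq]
    exact hdist
  exact hball this

lemma affine_zero_on_span {d : ℕ} (l : ES d →ᵃ[ℝ] ℝ) {s : Set (ES d)}
    (h : ∀ x ∈ s, l x = 0) : ∀ y ∈ affineSpan ℝ s, l y = 0 := by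
  intro y hy
  refine affineSpan_induction (p := fun y => l y = 0) hy (fun x hx => h x hx) ?_
  intro c u v w hu hv hw
  rw [AffineMap.map_vadd, map_smul, AffineMap.linearMap_vsub]
  simp only [vsub_eq_sub, vadd_eq_add, smul_eq_mul]
  rw [hu, hv, hw]; ring

lemma affine_zero_of_relpt {d : ℕ} (l : ES d →ᵃ[ℝ] ℝ) {s : Set (ES d)} {x₀ : ES d}
    (h₀ : relpt s x₀) (hnn : ∀ x ∈ s, 0 ≤ l x) (hz : l x₀ = 0) : ∀ x ∈ s, l x = 0 := by
  obtain ⟨hx₀s, ε, hε, hball⟩ := h₀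
  intro x hx
  set t : ℝ := ε / (2 * (dist x₀ x + 1)) with ht
  have ht0 : 0 < t := by positivity
  have hmem : t • (x₀ - x) + x₀ ∈ affineSpan ℝ s := by
    have := (affineSpan ℝ s).smul_vsub_vadd_mem t (subset_affineSpan ℝ s hx₀s)
      (subset_affineSpan ℝ s hx) (subset_affineSpan ℝ s hx₀s)
    simpa [vsub_eq_sub, vadd_eq_add] using this
  have hdist : dist (t • (x₀ - x) + x₀) x₀ < ε := by
    have h1 : dist (t • (x₀ - x) + x₀) x₀ = t * dist x₀ x := by
      simp [dist_eq_norm, norm_smul, abs_of_pos ht0]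
    rw [h1, ht]
    have hd : (0:ℝ) ≤ dist x₀ x := dist_nonneg
    rw [div_mul_eq_mul_div, div_lt_iff₀ (by positivity)]
    nlinarith
  have hs : t • (x₀ - x) + x₀ ∈ s := hball _ hmem hdist
  have hval : l (t • (x₀ - x) + x₀) = -t * l x := by
    have : t • (x₀ - x) + x₀ = t • (x₀ -ᵥ x) +ᵥ x₀ := by simp [vsub_eq_sub, vadd_eq_add]
    rw [this, AffineMap.map_vadd, map_smul, AffineMap.linearMap_vsub]
    rw [hz]
    simp only [vsub_eq_sub, vadd_eq_add, smul_eq_mul, zero_sub, add_zero, mul_neg, neg_mul]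
  have := hnn _ hs
  rw [hval] at this
  have hle : l x ≤ 0 := by nlinarith
  exact le_antisymm hle (hnn x hx)

lemma affine_continuous {d : ℕ} (l : ES d →ᵃ[ℝ] ℝ) : Continuous l :=
  l.continuous_of_finiteDimensional

/-- polynomial vanishing on a set with a relative interior point vanishes on the affine span -/
lemma pev_zero_span_of_relpt {d : ℕ} (q : MvPolynomial (Fin d) ℝ) {s : Set (ES d)} {x₀ : ES d}
    (h₀ : relpt s x₀) (h : ∀ x ∈ s, pev q x = 0) : ∀ x ∈ affineSpan ℝ s, pev q x = 0 := by
  obtain ⟨hx₀, ε, hε, hball⟩ := h₀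
  exact pev_zero_on_span q _ x₀ (subset_affineSpan ℝ s hx₀) ε hε
    (fun y hy hd => h y (hball y hy hd))

/-- **Key step**: if every point of `G` near a relative interior point is in `G`, and every
point of `G` can be approximated from `A' \ S`, then some `qᵢ` vanishes on the affine span
of `G` but not on `A'`. -/
lemma key_step {d m : ℕ} (q : Fin m → MvPolynomial (Fin d) ℝ)
    (S : Set (ES d)) (hSdef : S = {x | ∀ i, 0 ≤ pev (q i) x})
    (G : Set (ES d)) (hGS : G ⊆ S)
    (A' : AffineSubspace ℝ (ES d))
    (x₀ : ES d) (hx₀ : x₀ ∈ G) (ε : ℝ) (hε : 0 < ε)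
    (hball : ∀ y ∈ affineSpan ℝ G, dist y x₀ < ε → y ∈ G)
    (happx : ∀ y ∈ G, ∀ δ > (0:ℝ), ∃ z, z ∈ A' ∧ dist z y < δ ∧ z ∉ S) :
    ∃ i, (∀ x ∈ affineSpan ℝ G, pev (q i) x = 0) ∧
      ∃ z ∈ A', pev (q i) z < 0 := by
  -- step a: pointwise existence
  have ptwise : ∀ y ∈ G, ∃ i, pev (q i) y = 0 ∧ ∃ z ∈ A', pev (q i) z < 0 := by
    intro y hy
    by_contra hcon
    push_neg at hcon
    have hev : ∀ i : Fin m, ∀ᶠ z in nhds y, (z ∈ A' → 0 ≤ pev (q i) z) := by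
      intro i
      have hyS : 0 ≤ pev (q i) y := by
        have := hGS hy; rw [hSdef] at this; exact this i
      rcases lt_or_eq_of_le hyS with hpos | hzero
      · have : ∀ᶠ z in nhds y, 0 < pev (q i) z :=
          ((pev_continuous (q i)).continuousAt).eventually (eventually_gt_nhds hpos)
        exact this.mono fun z hz _ => le_of_lt hz
      · have hnoneg := hcon i hzero.symm
        exact Filter.Eventually.of_forall fun z hz => hnoneg z hz
    have hall : ∀ᶠ z in nhds y, ∀ i : Fin m, (z ∈ A' → 0 ≤ pev (q i) z) :=
      Filter.eventually_all.mpr hev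
    rw [Metric.eventually_nhds_iff] at hall
    obtain ⟨δ, hδ, hδball⟩ := hall
    obtain ⟨z, hzA, hzd, hzS⟩ := happx y hy δ hδ
    rw [hSdef] at hzS
    simp only [Set.mem_setOf_eq] at hzS
    push_neg at hzS
    obtain ⟨i, hi⟩ := hzS
    exact absurd (hδball hzd i hzA) (not_le.mpr hi)
  -- step b: Baire category
  classical
  set X := {u // u ∈ affineSpan ℝ G} with hX
  haveI : Nonempty X := ⟨⟨x₀, subset_affineSpan ℝ G hx₀⟩⟩
  have hclosed : IsClosed ((affineSpan ℝ G : Set (ES d))) :=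
    AffineSubspace.closed_of_finiteDimensional _
  haveI : CompleteSpace X := hclosed.completeSpace_coe
  set ι := {i : Fin m // ∃ z ∈ A', pev (q i) z < 0} with hι
  set B : Set X := {u : X | dist (u : ES d) x₀ < ε} with hB
  have hBopen : IsOpen B := by
    have : Continuous fun u : X => dist (u : ES d) x₀ :=
      (continuous_subtype_val.dist continuous_const)
    exact isOpen_lt this continuous_const
  set C : Option ι → Set X := fun o =>
    o.elim Bᶜ (fun i => {u : X | pev (q i.1) (u : ES d) = 0}) with hC
  have hCclosed : ∀ o, IsClosed (C o) := by
    rintro (_ | i)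
    · exact hBopen.isClosed_compl
    · exact isClosed_eq ((pev_continuous _).comp continuous_subtype_val) continuous_const
  have hCcover : ⋃ o, C o = Set.univ := by
    apply Set.eq_univ_of_forall
    intro u
    by_cases hu : u ∈ B
    · have huG : (u : ES d) ∈ G := hball _ u.2 hu
      obtain ⟨i, hiz, hineg⟩ := ptwise _ huG
      exact Set.mem_iUnion.mpr ⟨some ⟨i, hineg⟩, hiz⟩
    · exact Set.mem_iUnion.mpr ⟨none, hu⟩
  have hdense := dense_iUnion_interior_of_closed hCclosed hCcover
  have hBne : B.Nonempty := ⟨⟨x₀, subset_affineSpan ℝ G hx₀⟩, by simp [hB, hε]⟩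
  obtain ⟨u, huB, huI⟩ := dense_iff_inter_open.mp hdense B hBopen hBne
  obtain ⟨o, huo⟩ := Set.mem_iUnion.mp huI
  rcases o with _ | i
  · exact absurd huB (interior_subset huo : u ∈ Bᶜ)
  -- extract a small ball inside the zero set of q i
  have hopen : IsOpen (interior (C (some i)) ∩ B) := isOpen_interior.inter hBopen
  obtain ⟨δ, hδ, hδball⟩ := Metric.isOpen_iff.mp hopen u ⟨huo, huB⟩
  refine ⟨i.1, ?_, i.2⟩
  apply pev_zero_on_span (q i.1) _ (u : ES d) u.2 δ hδ
  intro z hz hzd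
  have : (⟨z, hz⟩ : X) ∈ Metric.ball u δ := by
    rw [Metric.mem_ball, Subtype.dist_eq]; exact hzd
  have h2 : (⟨z, hz⟩ : X) ∈ C (some i) := interior_subset (hδball this).1
  exact h2

/-- The polynomial representing an affine functional. -/
noncomputable def affPoly {d : ℕ} (l : ES d →ᵃ[ℝ] ℝ) : MvPolynomial (Fin d) ℝ :=
  MvPolynomial.C (l 0) +
    ∑ j : Fin d, MvPolynomial.C (l.linear (EuclideanSpace.single j 1)) * MvPolynomial.X j

lemma pev_affPoly {d : ℕ} (l : ES d →ᵃ[ℝ] ℝ) (x : ES d) : pev (affPoly l) x = l x := by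
  have hx : x = ∑ j : Fin d, x j • EuclideanSpace.single j (1:ℝ) := by
    ext i
    have hsum : (∑ j : Fin d, x j • EuclideanSpace.single j (1:ℝ)) i
        = ∑ j : Fin d, (x j • EuclideanSpace.single j (1:ℝ)) i :=
      by rw [WithLp.ofLp_sum]; exact Finset.sum_apply i Finset.univ _
    rw [hsum]
    simp only [PiLp.smul_apply, EuclideanSpace.single_apply, smul_eq_mul]
    simp [Finset.sum_ite_eq', mul_comm]
  have hlin : l.linear x = ∑ j : Fin d, l.linear (EuclideanSpace.single j 1) * x j := by
    conv_lhs => rw [hx]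
    rw [map_sum]
    congr 1; ext j
    rw [map_smul]
    simp [smul_eq_mul, mul_comm]
  have hdec : l x = l.linear x + l 0 := by
    have := l.decomp
    rw [this]; simp
  rw [hdec, hlin]
  simp only [pev, affPoly, map_add, map_sum, MvPolynomial.eval_C, MvPolynomial.eval_mul,
    MvPolynomial.eval_X]
  ring

lemma min_rep {d : ℕ} (S : Set (ES d)) (h : IsPolyhedron S) :
    ∃ (k : ℕ) (l : Fin k → (ES d →ᵃ[ℝ] ℝ)), S = {x | ∀ j, 0 ≤ l j x} ∧
      ∀ j : Fin k, ∃ w, (∀ i, i ≠ j → 0 ≤ l i w) ∧ l j w < 0 := by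
  classical
  have hP : ∃ k, ∃ l : Fin k → (ES d →ᵃ[ℝ] ℝ), S = {x | ∀ i, 0 ≤ l i x} := h
  obtain ⟨l, hl⟩ := Nat.find_spec hP
  refine ⟨Nat.find hP, l, hl, ?_⟩
  intro j
  by_contra hcon
  push_neg at hcon
  -- hcon : ∀ w, (∀ i, i ≠ j → 0 ≤ l i w) → 0 ≤ l j w
  have hk : Nat.find hP ≠ 0 := fun h0 => (h0 ▸ j).elim0
  have hkk : Nat.find hP = (Nat.find hP - 1) + 1 := (Nat.succ_pred_eq_of_pos
    (Nat.pos_of_ne_zero hk)).symm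
  set k' := Nat.find hP - 1 with hk'
  let j' : Fin (k' + 1) := Fin.cast hkk j
  let l'' : Fin (k' + 1) → (ES d →ᵃ[ℝ] ℝ) := fun i => l (Fin.cast hkk.symm i)
  let l' : Fin k' → (ES d →ᵃ[ℝ] ℝ) := fun i => l'' (j'.succAbove i)
  have hrep : S = {x | ∀ i, 0 ≤ l' i x} := by
    apply Set.eq_of_subset_of_subset
    · intro x hx i
      rw [hl] at hx
      exact hx _
    · intro x hx
      rw [hl]
      have hne : ∀ i : Fin (Nat.find hP), i ≠ j → 0 ≤ l i x := by
        intro i hij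
        have hij' : Fin.cast hkk i ≠ j' := by
          simp only [j', ne_eq, Fin.ext_iff, Fin.coe_cast]
          exact fun hc => hij (Fin.ext hc)
        obtain ⟨z, hz⟩ := Fin.exists_succAbove_eq hij'
        have := hx z
        simp only [l', l'', hz] at this
        simpa using this
      intro i
      by_cases hij : i = j
      · subst hij
        exact hcon x hne
      · exact hne i hij
  exact absurd ⟨l', hrep⟩ (Nat.find_min hP (by omega))

lemma convex_rep {d k : ℕ} (l : Fin k → (ES d →ᵃ[ℝ] ℝ)) :
    Convex ℝ {x : ES d | ∀ j, 0 ≤ l j x} := by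
  have : {x : ES d | ∀ j, 0 ≤ l j x} = ⋂ j, (l j) ⁻¹' (Set.Ici 0) := by
    ext x; simp [Set.mem_iInter, Set.mem_preimage]
  rw [this]
  exact convex_iInter fun j => (convex_Ici (0:ℝ)).affine_preimage _

lemma convex_eqzero {d : ℕ} (l : ES d →ᵃ[ℝ] ℝ) : Convex ℝ {x : ES d | l x = 0} := by
  have : {x : ES d | l x = 0} = l ⁻¹' {0} := rfl
  rw [this]
  exact (convex_singleton (0:ℝ)).affine_preimage _

lemma pev_neg {d : ℕ} (p : MvPolynomial (Fin d) ℝ) (x : ES d) : pev (-p) x = - pev p x := by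
  simp [pev]

lemma dist_smul_line {d : ℕ} (x y : ES d) (c : ℝ) (hc : 0 ≤ c) :
    dist (c • (x - y) + y) y = c * dist x y := by
  rw [dist_eq_norm, add_sub_cancel_right, norm_smul, dist_eq_norm]
  simp [abs_of_nonneg hc]

lemma smul_dist_lt {δ dxy : ℝ} (hδ : 0 < δ) (hd : 0 ≤ dxy) : δ / (2 * (dxy + 1)) * dxy < δ := by
  rw [div_mul_eq_mul_div, div_lt_iff₀ (by positivity)]
  nlinarith

set_option maxHeartbeats 2000000 in
lemma ML {d : ℕ} : ∀ (n m : ℕ) (S F : Set (ES d)) (q : Fin m → MvPolynomial (Fin d) ℝ),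
    IsPolyhedron S → S = {x | ∀ i, 0 ≤ pev (q i) x} →
    (F = S ∨ ∃ ℓ : ES d →ᵃ[ℝ] ℝ, (∀ x ∈ S, 0 ≤ ℓ x) ∧ F = {x ∈ S | ℓ x = 0}) → F.Nonempty →
    sDim S ≤ sDim F + n →
    sDim S - sDim F ≤
      Set.ncard {i : Fin m | (∀ x ∈ F, pev (q i) x = 0) ∧ ¬(∀ x ∈ S, pev (q i) x = 0)} := by
  intro n
  induction n with
  | zero =>
    intro m S F q _ _ _ _ hle
    simp only [Nat.add_zero] at hle
    rw [Nat.sub_eq_zero_of_le hle]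
    exact Nat.zero_le _
  | succ n IH =>
    intro m S F q hpoly hSdef hface hne hdim
    by_cases hle : sDim S ≤ sDim F
    · rw [Nat.sub_eq_zero_of_le hle]; exact Nat.zero_le _
    push_neg at hle
    classical
    obtain ⟨k, l, hlrep, hirr⟩ := min_rep S hpoly
    have hconvS : Convex ℝ S := hlrep ▸ convex_rep l
    rcases hface with hFS | ⟨ℓ, hℓnn, hFdef⟩
    · rw [hFS] at hle; omega
    have hFsub : F ⊆ S := by rw [hFdef]; exact fun x hx => hx.1
    have hSne : S.Nonempty := hne.mono hFsub
    have hconvF : Convex ℝ F := by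
      rw [hFdef]
      exact hconvS.inter (convex_eqzero ℓ)
    obtain ⟨x₀, hx₀relpt⟩ := relpt_exists hconvF hne
    have hx₀F : x₀ ∈ F := hx₀relpt.1
    have hx₀S : x₀ ∈ S := hFsub hx₀F
    have hℓx₀ : ℓ x₀ = 0 := by
      rw [hFdef] at hx₀F; exact hx₀F.2
    have hlnnS : ∀ i : Fin k, ∀ x ∈ S, 0 ≤ l i x := by
      intro i x hx; rw [hlrep] at hx; exact hx i
    -- find an active non-identically-zero constraint
    have hj₀ : ∃ j₀ : Fin k, l j₀ x₀ = 0 ∧ ∃ s ∈ S, l j₀ s ≠ 0 := by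
      by_contra hcon
      push_neg at hcon
      have hrelS : relpt S x₀ := by
        refine ⟨hx₀S, ?_⟩
        have hev : ∀ j : Fin k, ∀ᶠ y in nhds x₀, (y ∈ affineSpan ℝ S → 0 ≤ l j y) := by
          intro j
          have h0 : 0 ≤ l j x₀ := hlnnS j x₀ hx₀S
          rcases lt_or_eq_of_le h0 with hpos | hzero
          · exact (((affine_continuous (l j)).continuousAt).eventually
              (eventually_gt_nhds hpos)).mono fun y hy _ => le_of_lt hy
          · have hz : ∀ x ∈ S, l j x = 0 := hcon j hzero.symm
            have hz2 := affine_zero_on_span (l j) hz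
            exact Filter.Eventually.of_forall fun y hy => le_of_eq (hz2 y hy).symm
        have hall := Filter.eventually_all.mpr hev
        rw [Metric.eventually_nhds_iff] at hall
        obtain ⟨ε, hε, hball⟩ := hall
        refine ⟨ε, hε, fun y hy hdy => ?_⟩
        rw [hlrep]
        exact fun j => hball hdy j hy
      have hzero := affine_zero_of_relpt ℓ hrelS hℓnn hℓx₀
      have hFSe : F = S := by
        rw [hFdef]
        ext x
        simp only [Set.mem_setOf_eq]
        exact ⟨fun h => h.1, fun h => ⟨h, hzero x h⟩⟩
      rw [hFSe] at hle; omega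
    obtain ⟨j₀, hj₀x₀, hj₀ne⟩ := hj₀
    -- l j₀ vanishes identically on F
    have hj₀F : ∀ x ∈ F, l j₀ x = 0 :=
      affine_zero_of_relpt (l j₀) hx₀relpt (fun x hx => hlnnS j₀ x (hFsub hx)) hj₀x₀
    -- a relative interior point z of S with positive non-trivial constraints
    obtain ⟨z, hzrelpt⟩ := relpt_exists hconvS hSne
    have hzpos : ∀ i : Fin k, (∃ s ∈ S, l i s ≠ 0) → 0 < l i z := by
      intro i hi
      rcases lt_or_eq_of_le (hlnnS i z hzrelpt.1) with h | h
      · exact h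
      · exfalso
        obtain ⟨s, hs, hsne⟩ := hi
        exact hsne (affine_zero_of_relpt (l i) hzrelpt (hlnnS i) h.symm s hs)
    -- irredundancy witness and crossing point
    obtain ⟨w, hw_other, hw_neg⟩ := hirr j₀
    have haz : 0 < l j₀ z := hzpos j₀ hj₀ne
    have hab : 0 < l j₀ z - l j₀ w := by linarith
    set t : ℝ := l j₀ z / (l j₀ z - l j₀ w) with htdef
    have ht0 : 0 < t := div_pos haz hab
    have ht1 : t < 1 := by rw [div_lt_one hab]; linarith
    set y : ES d := t • (w - z) + z with hydef
    clear_value t y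
    have hval : ∀ g : ES d →ᵃ[ℝ] ℝ, g y = (1 - t) * g z + t * g w := by
      intro g
      have h1 : y = t • (w -ᵥ z) +ᵥ z := by simp [hydef, vsub_eq_sub, vadd_eq_add]
      rw [h1, AffineMap.map_vadd, map_smul, AffineMap.linearMap_vsub]
      simp only [vsub_eq_sub, vadd_eq_add, smul_eq_mul]
      ring
    have hyj₀ : l j₀ y = 0 := by
      rw [hval]
      rw [htdef]
      field_simp
      ring
    have hyother : ∀ i : Fin k, i ≠ j₀ → 0 ≤ l i y := by
      intro i hij
      rw [hval]
      have h1 := hlnnS i z hzrelpt.1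
      have h2 := hw_other i hij
      nlinarith
    have hyS : y ∈ S := by
      rw [hlrep]
      intro i
      by_cases hij : i = j₀
      · subst hij; rw [hyj₀]
      · exact hyother i hij
    have hystrict : ∀ i : Fin k, i ≠ j₀ → (∃ s ∈ S, l i s ≠ 0) → 0 < l i y := by
      intro i hij hi
      rw [hval]
      have h1 := hzpos i hi
      have h2 := hw_other i hij
      nlinarith
    -- the affine subspace A₁ = affineSpan S ⊓ {l j₀ = 0}
    set V : Submodule ℝ (ES d) := (affineSpan ℝ S).direction with hV
    set W : Submodule ℝ (ES d) := V ⊓ LinearMap.ker (l j₀).linear with hW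
    set A₁ : AffineSubspace ℝ (ES d) := AffineSubspace.mk' y W with hA₁
    have hySpan : y ∈ affineSpan ℝ S := subset_affineSpan ℝ S hyS
    have hyA₁ : y ∈ A₁ := AffineSubspace.self_mem_mk' y W
    have memA₁ : ∀ x, x ∈ A₁ ↔ (x ∈ affineSpan ℝ S ∧ l j₀ x = 0) := by
      intro x
      rw [hA₁, AffineSubspace.mem_mk']
      constructor
      · intro hx
        obtain ⟨hxV, hxK⟩ := Submodule.mem_inf.mp hx
        constructor
        · have hxy : x = (x -ᵥ y) +ᵥ y := by simp
          rw [hxy]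
          exact AffineSubspace.vadd_mem_of_mem_direction hxV hySpan
        · have hlin : (l j₀).linear (x -ᵥ y) = l j₀ x - l j₀ y := by
            rw [AffineMap.linearMap_vsub]; rfl
          rw [LinearMap.mem_ker, hlin, hyj₀] at hxK
          linarith
      · rintro ⟨hxS, hxj⟩
        apply Submodule.mem_inf.mpr
        constructor
        · exact AffineSubspace.vsub_mem_direction hxS hySpan
        · rw [LinearMap.mem_ker, AffineMap.linearMap_vsub, hxj, hyj₀]
          simp
    set G : Set (ES d) := S ∩ {x | l j₀ x = 0} with hGdef
    have hGS : G ⊆ S := Set.inter_subset_left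
    have hyG : y ∈ G := ⟨hyS, hyj₀⟩
    have hFG : F ⊆ G := fun x hx => ⟨hFsub hx, hj₀F x hx⟩
    -- small balls of A₁ around y are contained in G
    have hδex : ∃ δ > (0:ℝ), ∀ x ∈ A₁, dist x y < δ → x ∈ G := by
      have hev : ∀ i : Fin k, ∀ᶠ x in nhds y, (x ∈ A₁ → 0 ≤ l i x) := by
        intro i
        by_cases hij : i = j₀
        · subst hij
          exact Filter.Eventually.of_forall fun x hx => le_of_eq ((memA₁ x).mp hx).2.symm
        by_cases hi : ∃ s ∈ S, l i s ≠ 0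
        · exact (((affine_continuous (l i)).continuousAt).eventually
            (eventually_gt_nhds (hystrict i hij hi))).mono fun x hx _ => le_of_lt hx
        · push_neg at hi
          have hz2 := affine_zero_on_span (l i) (fun x hx => hi x hx)
          exact Filter.Eventually.of_forall fun x hx =>
            le_of_eq (hz2 x ((memA₁ x).mp hx).1).symm
      have hall := Filter.eventually_all.mpr hev
      rw [Metric.eventually_nhds_iff] at hall
      obtain ⟨δ, hδ, hball⟩ := hall
      refine ⟨δ, hδ, fun x hx hdx => ⟨?_, ((memA₁ x).mp hx).2⟩⟩
      rw [hlrep]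
      exact fun i => hball hdx i hx
    -- affineSpan G = A₁
    have hAG : affineSpan ℝ G = A₁ := by
      apply le_antisymm
      · apply affineSpan_le.mpr
        intro x hx
        exact (memA₁ x).mpr ⟨subset_affineSpan ℝ S hx.1, hx.2⟩
      · intro x hx
        obtain ⟨δ, hδ0, hδ⟩ := hδex
        set c : ℝ := δ / (2 * (dist x y + 1)) with hc
        have hc0 : 0 < c := by positivity
        set p : ES d := c • (x - y) + y with hp
        have hpA₁ : p ∈ A₁ := by
          have hmem := A₁.smul_vsub_vadd_mem c hx hyA₁ hyA₁
          simpa [vsub_eq_sub, vadd_eq_add] using hmem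
        have hpdist : dist p y < δ := by
          rw [hp, dist_smul_line x y c (le_of_lt hc0), hc]
          exact smul_dist_lt hδ0 dist_nonneg
        have hpG : p ∈ G := hδ p hpA₁ hpdist
        have hyspanG : y ∈ affineSpan ℝ G := subset_affineSpan ℝ G hyG
        have hpspanG : p ∈ affineSpan ℝ G := subset_affineSpan ℝ G hpG
        have hxeq : x = c⁻¹ • (p -ᵥ y) +ᵥ y := by
          rw [hp]
          simp only [vsub_eq_sub, vadd_eq_add, add_sub_cancel_right]
          rw [smul_smul, inv_mul_cancel₀ (ne_of_gt hc0), one_smul]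
          abel
        rw [hxeq]
        exact (affineSpan ℝ G).smul_vsub_vadd_mem _ hpspanG hyspanG hyspanG
    -- dimension count : sDim G + 1 = sDim S
    have hdimG : sDim G + 1 = sDim S := by
      obtain ⟨s₀, hs₀S, hs₀ne⟩ := hj₀ne
      set f : ↥V →ₗ[ℝ] ℝ := (l j₀).linear ∘ₗ V.subtype with hf
      have hvV : s₀ -ᵥ y ∈ V := AffineSubspace.vsub_mem_direction (subset_affineSpan ℝ S hs₀S) hySpan
      have hfv : f ⟨s₀ -ᵥ y, hvV⟩ = l j₀ s₀ := by
        simp only [hf, LinearMap.coe_comp, Function.comp_apply, Submodule.coe_subtype]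
        rw [AffineMap.linearMap_vsub, hyj₀]
        simp
      have hsurj : Function.Surjective f := by
        intro cval
        refine ⟨(cval / l j₀ s₀) • ⟨s₀ -ᵥ y, hvV⟩, ?_⟩
        rw [map_smul, hfv, smul_eq_mul]
        field_simp
      have hker : LinearMap.ker f = Submodule.comap V.subtype W := by
        rw [hf, LinearMap.ker_comp, hW, Submodule.comap_inf, Submodule.comap_subtype_self]
        simp
      have hrank := LinearMap.finrank_range_add_finrank_ker f
      rw [LinearMap.range_eq_top.mpr hsurj, finrank_top, Module.finrank_self] at hrank
      have hWV : W ≤ V := inf_le_left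
      have hWeq : Module.finrank ℝ (Submodule.comap V.subtype W) = Module.finrank ℝ W :=
        (Submodule.comapSubtypeEquivOfLe hWV).finrank_eq
      have hsG : sDim G = Module.finrank ℝ W := by
        rw [sDim, hAG, hA₁, AffineSubspace.direction_mk']
      have hsS : sDim S = Module.finrank ℝ V := rfl
      rw [hsG, hsS]
      rw [hker, hWeq] at hrank
      omega
    -- apply the key step to get a new vanishing polynomial
    have hconvG : Convex ℝ G := hconvS.inter (convex_eqzero (l j₀))
    obtain ⟨y₀, hy₀relpt⟩ := relpt_exists hconvG ⟨y, hyG⟩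
    obtain ⟨hy₀G, ε₀, hε₀, hball₀⟩ := hy₀relpt
    obtain ⟨s₀, hs₀S, hs₀ne⟩ := hj₀ne
    have hs₀pos : 0 < l j₀ s₀ := lt_of_le_of_ne (hlnnS j₀ s₀ hs₀S) (Ne.symm hs₀ne)
    have happx : ∀ yy ∈ G, ∀ δ > (0:ℝ), ∃ z', z' ∈ affineSpan ℝ S ∧ dist z' yy < δ ∧ z' ∉ S := by
      intro yy hyy δ hδ
      set c : ℝ := δ / (2 * (dist (yy - s₀ + yy) yy + 1)) with hcw
      -- use direction yy - s₀
      set c2 : ℝ := δ / (2 * (dist yy s₀ + 1)) with hc2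
      have hc20 : 0 < c2 := by positivity
      refine ⟨c2 • (yy - s₀) + yy, ?_, ?_, ?_⟩
      · have hmem := (affineSpan ℝ S).smul_vsub_vadd_mem c2
          (subset_affineSpan ℝ S (hGS hyy)) (subset_affineSpan ℝ S hs₀S)
          (subset_affineSpan ℝ S (hGS hyy))
        simpa [vsub_eq_sub, vadd_eq_add] using hmem
      · have h1 : dist (c2 • (yy - s₀) + yy) yy = c2 * dist yy s₀ := by
          rw [dist_eq_norm, add_sub_cancel_right, norm_smul, dist_eq_norm]
          simp [abs_of_nonneg (le_of_lt hc20)]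
        rw [h1, hc2]
        exact smul_dist_lt hδ dist_nonneg
      · intro hmem
        have hneg : l j₀ (c2 • (yy - s₀) + yy) = - c2 * l j₀ s₀ := by
          have h1 : c2 • (yy - s₀) + yy = c2 • (yy -ᵥ s₀) +ᵥ yy := by
            simp [vsub_eq_sub, vadd_eq_add]
          rw [h1, AffineMap.map_vadd, map_smul, AffineMap.linearMap_vsub]
          have : l j₀ yy = 0 := hyy.2
          simp only [vsub_eq_sub, vadd_eq_add, smul_eq_mul]
          rw [this]
          ring
        have := hlnnS j₀ _ hmem
        rw [hneg] at this
        nlinarith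
    obtain ⟨istar, histar_span, zneg, hznegA, hznegval⟩ :=
      key_step q S hSdef G hGS (affineSpan ℝ S) y₀ hy₀G ε₀ hε₀ hball₀ happx
    have histar_F : ∀ x ∈ F, pev (q istar) x = 0 := fun x hx =>
      histar_span x (subset_affineSpan ℝ G (hFG hx))
    have histar_G : ∀ x ∈ G, pev (q istar) x = 0 := fun x hx =>
      histar_span x (subset_affineSpan ℝ G hx)
    have histar_nS : ¬(∀ x ∈ S, pev (q istar) x = 0) := by
      intro hvan
      have := pev_zero_span_of_relpt (q istar) hzrelpt hvan zneg hznegA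
      linarith
    -- extended polynomial family for G
    set q' : Fin (m + 2) → MvPolynomial (Fin d) ℝ :=
      Fin.append q ![affPoly (l j₀), -affPoly (l j₀)] with hq'
    have hvanishG2 : ∀ i₂ : Fin 2, ∀ x ∈ G, pev (q' (Fin.natAdd m i₂)) x = 0 := by
      intro i₂ x hx
      rw [hq', Fin.append_right]
      have hxj : l j₀ x = 0 := hx.2
      fin_cases i₂ <;>
        simp [pev_affPoly, pev_neg, hxj]
    have hG'def : G = {x | ∀ i : Fin (m + 2), 0 ≤ pev (q' i) x} := by
      ext x
      constructor
      · intro hx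
        intro i
        refine Fin.addCases (fun i₁ => ?_) (fun i₂ => ?_) i
        · rw [hq', Fin.append_left]
          have := hGS hx
          rw [hSdef] at this
          exact this i₁
        · rw [hvanishG2 i₂ x hx]
      · intro hx
        have h1 : ∀ i : Fin m, 0 ≤ pev (q i) x := by
          intro i
          have := hx (Fin.castAdd 2 i)
          rwa [hq', Fin.append_left] at this
        have h2 : 0 ≤ l j₀ x := by
          have := hx (Fin.natAdd m 0)
          rw [hq', Fin.append_right] at this
          simpa [pev_affPoly] using this
        have h3 : l j₀ x ≤ 0 := by
          have := hx (Fin.natAdd m 1)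
          rw [hq', Fin.append_right] at this
          simp only [Matrix.cons_val_one, Matrix.head_cons, Matrix.cons_val_zero, pev_neg, pev_affPoly] at this
          linarith
        refine ⟨?_, le_antisymm h3 h2⟩
        rw [hSdef]
        exact h1
    have hpolyG : IsPolyhedron G := by
      refine ⟨k + 1, (fun i : Fin (k + 1) => if h : (i : ℕ) < k then l ⟨i, h⟩ else -(l j₀)), ?_⟩
      ext x
      simp only [Set.mem_setOf_eq]
      constructor
      · intro hx i
        by_cases h : (i : ℕ) < k
        · rw [dif_pos h]
          exact hlnnS _ x hx.1
        · rw [dif_neg h]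
          have hx2 : l j₀ x = 0 := hx.2
          simp [hx2]
      · intro hx
        have h1 : ∀ i : Fin k, 0 ≤ l i x := by
          intro i
          have := hx ⟨(i : ℕ), by omega⟩
          rwa [dif_pos i.isLt] at this
        have h2 : 0 ≤ (-(l j₀)) x := by
          have := hx ⟨k, by omega⟩
          rwa [dif_neg (by simp)] at this
        have h2' : l j₀ x ≤ 0 := by simpa using h2
        exact ⟨by rw [hlrep]; exact h1, le_antisymm h2' (h1 j₀)⟩
    have hfaceG : F = G ∨ ∃ ℓ' : ES d →ᵃ[ℝ] ℝ, (∀ x ∈ G, 0 ≤ ℓ' x) ∧ F = {x ∈ G | ℓ' x = 0} := by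
      right
      refine ⟨ℓ, fun x hx => hℓnn x (hGS hx), ?_⟩
      ext x
      constructor
      · intro hx
        refine ⟨hFG hx, ?_⟩
        rw [hFdef] at hx
        exact hx.2
      · rintro ⟨hxG, hxl⟩
        rw [hFdef]
        exact ⟨hGS hxG, hxl⟩
    have hdimG' : sDim G ≤ sDim F + n := by omega
    have hIH := IH (m + 2) G F q' hpolyG hG'def hfaceG hne hdimG'
    -- counting
    set T' : Set (Fin (m + 2)) :=
      {i | (∀ x ∈ F, pev (q' i) x = 0) ∧ ¬(∀ x ∈ G, pev (q' i) x = 0)} with hT'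
    set U : Set (Fin m) :=
      {i | (∀ x ∈ F, pev (q i) x = 0) ∧ ¬(∀ x ∈ G, pev (q i) x = 0)} with hU
    set T : Set (Fin m) :=
      {i | (∀ x ∈ F, pev (q i) x = 0) ∧ ¬(∀ x ∈ S, pev (q i) x = 0)} with hT
    have hT'small : ∀ j ∈ T', (j : ℕ) < m := by
      intro j hj
      by_contra hjm
      push_neg at hjm
      have hj2 : ∃ i₂ : Fin 2, j = Fin.natAdd m i₂ := by
        refine ⟨⟨(j : ℕ) - m, by omega⟩, ?_⟩
        ext
        simp only [Fin.natAdd_mk]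
        omega
      obtain ⟨i₂, rfl⟩ := hj2
      exact hj.2 (hvanishG2 i₂)
    set φ : Fin (m + 2) → Fin m := fun j => if h : (j : ℕ) < m then ⟨j, h⟩ else istar with hφ
    have hqφ : ∀ j ∈ T', q' j = q (φ j) := by
      intro j hj
      have hjm := hT'small j hj
      have hjeq : j = Fin.castAdd 2 (⟨(j : ℕ), hjm⟩ : Fin m) := by
        ext; simp
      have hφj : φ j = ⟨(j : ℕ), hjm⟩ := by simp only [hφ]; rw [dif_pos hjm]
      rw [hφj]
      conv_lhs => rw [hjeq]
      rw [hq', Fin.append_left]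
    have hmaps : Set.MapsTo φ T' U := by
      intro j hj
      have h1 := hqφ j hj
      obtain ⟨hjF, hjG⟩ := hj
      constructor
      · intro x hx
        rw [← h1]
        exact hjF x hx
      · intro hc
        apply hjG
        intro x hx
        rw [h1]
        exact hc x hx
    have hinj : Set.InjOn φ T' := by
      intro j1 h1 j2 h2 he
      have hm1 := hT'small j1 h1
      have hm2 := hT'small j2 h2
      simp only [hφ, dif_pos hm1, dif_pos hm2] at he
      have hv : ((⟨(j1 : ℕ), hm1⟩ : Fin m)).val = ((⟨(j2 : ℕ), hm2⟩ : Fin m)).val :=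
        congrArg Fin.val he
      exact Fin.ext hv
    have hcard1 : Set.ncard T' ≤ Set.ncard U :=
      Set.ncard_le_ncard_of_injOn φ hmaps hinj (Set.toFinite U)
    have histar_notU : istar ∉ U := fun hc => hc.2 histar_G
    have histar_T : istar ∈ T := ⟨histar_F, histar_nS⟩
    have hUT : insert istar U ⊆ T := by
      intro i hi
      rcases Set.mem_insert_iff.mp hi with rfl | hiU
      · exact histar_T
      · refine ⟨hiU.1, fun hc => hiU.2 fun x hx => hc x (hGS hx)⟩
    have hcard2 : Set.ncard (insert istar U) = Set.ncard U + 1 :=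
      Set.ncard_insert_of_notMem histar_notU (Set.toFinite U)
    have hcard3 : Set.ncard (insert istar U) ≤ Set.ncard T :=
      Set.ncard_le_ncard hUT (Set.toFinite T)
    omega

/-- **Proposition.** If a `d`-dimensional polyhedron `S ⊆ ℝ^d` is represented as
`S = {q₁ ≥ 0, …, q_m ≥ 0}` and `F` is a nonempty face of `S` of dimension `f`, then at
least `d - f` of the polynomials `qᵢ` vanish identically on `F`; in particular `m ≥ d - f`. -/
theorem vanishing_polynomials_on_face {d m f : ℕ}
    (S F : Set (EuclideanSpace ℝ (Fin d)))
    (q : Fin m → MvPolynomial (Fin d) ℝ)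
    (hpoly : IsPolyhedron S)
    (hdim : affineSpan ℝ S = ⊤)
    (hS : S = {x | ∀ i, 0 ≤ pev (q i) x})
    (hF : IsFace S F)
    (hne : F.Nonempty)
    (hf : sDim F = f) :
    d - f ≤ Set.ncard {i : Fin m | ∀ x ∈ F, pev (q i) x = 0} ∧ d - f ≤ m := by
  have hdS : sDim S = d := by
    show Module.finrank ℝ (affineSpan ℝ S).direction = d
    rw [hdim, AffineSubspace.direction_top, finrank_top]
    exact finrank_euclideanSpace_fin
  have hF' : F = S ∨ ∃ ℓ : ES d →ᵃ[ℝ] ℝ, (∀ x ∈ S, 0 ≤ ℓ x) ∧ F = {x ∈ S | ℓ x = 0} := hF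
  have h := ML d m S F q hpoly hS hF' hne (by omega)
  rw [hdS, hf] at h
  constructor
  · exact le_trans h (Set.ncard_le_ncard (fun i hi => hi.1) (Set.toFinite _))
  · refine le_trans h (le_trans (Set.ncard_le_ncard (Set.subset_univ _) (Set.toFinite _)) ?_)
    rw [Set.ncard_univ]
    simp
end

section
/- Let ρ > 0 and let s, k ∈ ℕ with s ≤ k. Then there exists ε > 0 such that for all real numbers a_1, …, a_k with |a_1| ≤ ε, …, |a_s| ≤ ε and a_{s+1} ≥ ρ, …, a_k ≥ ρ, the following are equivalent: (i) a_1 ≥ 0, …, a_s ≥ 0; (ii) σ_{k−s+1}(a_1, …, a_k) ≥ 0, σ_{k−s+2}(a_1, …, a_k) ≥ 0, …, σ_k(a_1, …, a_k) ≥ 0. -/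
/-- The `i`-th elementary symmetric function of `a 0, …, a (k-1)`. -/
noncomputable def esymmVal {k : ℕ} (a : Fin k → ℝ) (i : ℕ) : ℝ :=
  ∑ t ∈ Finset.powersetCard i (Finset.univ : Finset (Fin k)), ∏ j ∈ t, a j

lemma sum_powersetCard_aux {k : ℕ} (j : ℕ) (a : Fin k → ℝ) (μ : ℝ) :
    ∑ T ∈ Finset.powersetCard j (Finset.univ : Finset (Fin k)),
      (∏ i ∈ T, a i) * μ ^ (k - T.card) = esymmVal a j * μ ^ (k - j) := by
  rw [esymmVal, Finset.sum_mul]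
  refine Finset.sum_congr rfl fun T hT => ?_
  rw [(Finset.mem_powersetCard.mp hT).2]

lemma sum_filter_card_aux {k : ℕ} (a : Fin k → ℝ) (μ : ℝ) (p : ℕ → Prop)
    [DecidablePred p] :
    ∑ T ∈ (Finset.univ : Finset (Fin k)).powerset.filter (fun T => p T.card),
      (∏ i ∈ T, a i) * μ ^ (k - T.card)
    = ∑ j ∈ (Finset.range (k+1)).filter p, esymmVal a j * μ ^ (k - j) := by
  rw [← Finset.sum_fiberwise_of_maps_to (g := Finset.card)
      (t := (Finset.range (k+1)).filter p)
      (fun T hT => by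
        simp only [Finset.mem_filter, Finset.mem_powerset] at hT
        simp only [Finset.mem_filter, Finset.mem_range]
        exact ⟨Nat.lt_succ_of_le (le_trans (Finset.card_le_card hT.1) (by simp)), hT.2⟩)]
  refine Finset.sum_congr rfl fun j hj => ?_
  rw [← sum_powersetCard_aux j a μ]
  refine Finset.sum_congr ?_ fun _ _ => rfl
  simp only [Finset.mem_filter, Finset.mem_range] at hj
  ext T
  simp only [Finset.mem_filter, Finset.mem_powerset, Finset.mem_powersetCard]
  constructor
  · rintro ⟨⟨h1, _⟩, h3⟩; exact ⟨h1, h3⟩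
  · rintro ⟨h1, h2⟩; exact ⟨⟨h1, by rw [h2]; exact hj.2⟩, h2⟩

set_option maxHeartbeats 2000000 in
/-- **Lemma.** Let `ρ > 0` and `s ≤ k`. There is `ε > 0` such that whenever
`|a₁|, …, |a_s| ≤ ε` and `a_{s+1}, …, a_k ≥ ρ`, one has `a₁, …, a_s ≥ 0` if and only if
`σ_{k-s+1}(a) ≥ 0, …, σ_k(a) ≥ 0`. -/
theorem esymm_sign_criterion {k : ℕ} (s : ℕ) (ρ : ℝ)
    (hρ : 0 < ρ) (hsk : s ≤ k) :
    ∃ ε > (0 : ℝ), ∀ a : Fin k → ℝ,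
      (∀ i : Fin k, (i : ℕ) < s → |a i| ≤ ε) →
      (∀ i : Fin k, s ≤ (i : ℕ) → ρ ≤ a i) →
      ((∀ i : Fin k, (i : ℕ) < s → 0 ≤ a i) ↔
        (∀ j : ℕ, k - s + 1 ≤ j → j ≤ k → 0 ≤ esymmVal a j)) := by
  classical
  set ε : ℝ := ρ / 2 ^ (k + 1) with hεdef
  have hεpos : 0 < ε := by positivity
  have hερ : ε ≤ ρ := by
    rw [hεdef, div_le_iff₀ (by positivity)]
    have h2 : (1:ℝ) ≤ 2 ^ (k+1) := one_le_pow₀ (by norm_num)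
    nlinarith [hρ, h2]
  refine ⟨ε, hεpos, fun a hsmall hbig => ?_⟩
  constructor
  · -- easy direction
    intro hpos j _ _
    refine Finset.sum_nonneg fun T _ => Finset.prod_nonneg fun i _ => ?_
    rcases lt_or_ge (i : ℕ) s with h | h
    · exact hpos i h
    · exact le_trans hρ.le (hbig i h)
  · intro hσ
    by_contra hneg
    push_neg at hneg
    obtain ⟨i0, hi0s, hi0⟩ := hneg
    set d : ℕ := k - s with hd
    -- the set of negative entries
    set N : Finset (Fin k) := Finset.univ.filter (fun i => a i < 0) with hN
    have hNmem : ∀ i, i ∈ N ↔ a i < 0 := by intro i; simp [hN]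
    have hNs : ∀ i ∈ N, (i : ℕ) < s := by
      intro i hi
      by_contra h
      exact absurd (le_trans hρ.le (hbig i (le_of_not_gt h))) (not_le.mpr ((hNmem i).mp hi))
    have hNne : N.Nonempty := ⟨i0, (hNmem i0).mpr hi0⟩
    set μ : ℝ := N.sup' hNne (fun i => -a i) with hμ
    have hμle : ∀ i ∈ N, -a i ≤ μ := by
      intro i hi; rw [hμ]; exact Finset.le_sup' (fun i => -a i) hi
    obtain ⟨i1, hi1N, hi1⟩ := Finset.exists_mem_eq_sup' hNne (fun i => -a i)
    have hμ1 : μ = -a i1 := by rw [hμ, hi1]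
    have hμpos : 0 < μ := by
      rw [hμ1]; simpa using (hNmem i1).mp hi1N
    have hμε : μ ≤ ε := by
      rw [hμ1]
      calc -a i1 ≤ |a i1| := neg_le_abs _
        _ ≤ ε := hsmall i1 (hNs i1 hi1N)
    have hμρ : μ ≤ ρ := le_trans hμε hερ
    -- main identity
    have hcard_univ : (Finset.univ : Finset (Fin k)).card = k := by simp
    have key : ∑ T ∈ (Finset.univ : Finset (Fin k)).powerset,
        (∏ i ∈ T, a i) * μ ^ (k - T.card) = 0 := by
      have hz : ∏ i : Fin k, (a i + μ) = 0 :=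
        Finset.prod_eq_zero (Finset.mem_univ i1) (by rw [hμ1]; ring)
      calc ∑ T ∈ (Finset.univ : Finset (Fin k)).powerset,
            (∏ i ∈ T, a i) * μ ^ (k - T.card)
          = ∑ T ∈ (Finset.univ : Finset (Fin k)).powerset,
            (∏ i ∈ T, a i) * ∏ _i ∈ Finset.univ \ T, μ := by
            refine Finset.sum_congr rfl fun T hT => ?_
            rw [Finset.prod_const, Finset.card_sdiff_of_subset (Finset.mem_powerset.mp hT),
              hcard_univ]
        _ = ∏ i : Fin k, (a i + μ) :=
            (Finset.prod_add a (fun _ => μ) (Finset.univ : Finset (Fin k))).symm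
        _ = 0 := hz
    -- split into low and high parts
    rw [← Finset.sum_filter_add_sum_filter_not _ (fun T => T.card ≤ d)] at key
    have hhigh : 0 ≤ ∑ T ∈ (Finset.univ : Finset (Fin k)).powerset.filter
        (fun T => ¬ T.card ≤ d), (∏ i ∈ T, a i) * μ ^ (k - T.card) := by
      rw [sum_filter_card_aux a μ (fun c => ¬ c ≤ d)]
      refine Finset.sum_nonneg fun j hj => ?_
      simp only [Finset.mem_filter, Finset.mem_range, not_le] at hj
      have h1 : k - s + 1 ≤ j := by omega
      have h2 : j ≤ k := by omega
      exact mul_nonneg (hσ j h1 h2) (by positivity)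
    -- the low part is positive
    set S : Finset (Finset (Fin k)) :=
      (Finset.univ : Finset (Fin k)).powerset.filter (fun T => T.card ≤ d) with hS
    set Tstar : Finset (Fin k) := Finset.univ.filter (fun i => s ≤ (i : ℕ)) with hTstar
    have hTstar_card : Tstar.card = d := by
      have h1 : (Finset.univ.filter (fun i : Fin k => (i : ℕ) < s)).card = s := by
        have he : Finset.univ.filter (fun i : Fin k => (i : ℕ) < s)
            = Finset.map (Fin.castLEEmb hsk) Finset.univ := by
          ext i
          simp only [Finset.mem_filter, Finset.mem_univ, true_and, Finset.mem_map,
            Fin.castLEEmb_apply]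
          constructor
          · intro h; exact ⟨⟨(i : ℕ), h⟩, by ext; simp⟩
          · rintro ⟨j, -, rfl⟩; simpa using j.2
        rw [he, Finset.card_map, Finset.card_univ, Fintype.card_fin]
      have h2 : Tstar = (Finset.univ.filter (fun i : Fin k => (i : ℕ) < s))ᶜ := by
        ext i; simp [hTstar, not_lt]
      rw [h2, Finset.card_compl, h1, Fintype.card_fin]
    have hB : (0:ℝ) < ρ ^ d ∧ ρ ^ d ≤ ∏ i ∈ Tstar, a i := by
      constructor
      · positivity
      · calc ρ ^ d = ∏ _i ∈ Tstar, ρ := by rw [Finset.prod_const, hTstar_card]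
          _ ≤ ∏ i ∈ Tstar, a i := Finset.prod_le_prod (fun _ _ => hρ.le)
              (fun i hi => hbig i (Finset.mem_filter.mp hi).2)
    set B : ℝ := ∏ i ∈ Tstar, a i with hBdef
    have hBpos : 0 < B := lt_of_lt_of_le hB.1 hB.2
    set G : ℝ := B * μ ^ s with hG
    have hGpos : 0 < G := by positivity
    have hFstar : (∏ i ∈ Tstar, a i) * μ ^ (k - Tstar.card) = G := by
      rw [hTstar_card]
      have : k - d = s := by omega
      rw [this]
    -- bad terms bound
    have hbad : ∀ T ∈ S, (∃ i ∈ T, a i < 0) →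
        -((μ / ρ) * G) ≤ (∏ i ∈ T, a i) * μ ^ (k - T.card) := by
      intro T hTS hex
      obtain ⟨i2, hi2T, hi2neg⟩ := hex
      have hTd : T.card ≤ d := (Finset.mem_filter.mp hTS).2
      have habs : |(∏ i ∈ T, a i) * μ ^ (k - T.card)| ≤ (μ / ρ) * G := by
        rw [abs_mul, Finset.abs_prod, abs_pow, abs_of_nonneg hμpos.le]
        set Ts : Finset (Fin k) := T.filter (fun i => (i : ℕ) < s) with hTs
        set Tb : Finset (Fin k) := T.filter (fun i => ¬ (i : ℕ) < s) with hTb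
        have hsplit : ∏ i ∈ T, |a i| = (∏ i ∈ Ts, |a i|) * (∏ i ∈ Tb, |a i|) :=
          (Finset.prod_filter_mul_prod_filter_not T _ _).symm
        have hcards : Ts.card + Tb.card = T.card :=
          Finset.card_filter_add_card_filter_not _
        have hi2Ts : i2 ∈ Ts := by
          refine Finset.mem_filter.mpr ⟨hi2T, ?_⟩
          exact hNs i2 ((hNmem i2).mpr hi2neg)
        have hcpos : 1 ≤ Ts.card := Finset.card_pos.mpr ⟨i2, hi2Ts⟩
        -- bound on small part
        have hTsbound : ∏ i ∈ Ts, |a i| ≤ μ * ε ^ (Ts.card - 1) := by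
          rw [← Finset.mul_prod_erase Ts _ hi2Ts]
          have h1 : |a i2| ≤ μ := by
            rw [abs_of_neg hi2neg]
            exact hμle i2 ((hNmem i2).mpr hi2neg)
          have h2 : ∏ i ∈ Ts.erase i2, |a i| ≤ ε ^ (Ts.card - 1) := by
            calc ∏ i ∈ Ts.erase i2, |a i| ≤ ∏ _i ∈ Ts.erase i2, ε :=
                Finset.prod_le_prod (fun _ _ => abs_nonneg _)
                  (fun i hi => hsmall i
                    (Finset.mem_filter.mp (Finset.mem_of_mem_erase hi)).2)
              _ = ε ^ (Ts.card - 1) := by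
                rw [Finset.prod_const, Finset.card_erase_of_mem hi2Ts]
          exact mul_le_mul h1 h2 (Finset.prod_nonneg fun _ _ => abs_nonneg _)
            hμpos.le
        -- bound on big part
        have hTbsub : Tb ⊆ Tstar := by
          intro i hi
          simp only [hTb, Finset.mem_filter, not_lt] at hi
          exact Finset.mem_filter.mpr ⟨Finset.mem_univ i, hi.2⟩
        have hTbabs : ∏ i ∈ Tb, |a i| = ∏ i ∈ Tb, a i := by
          refine Finset.prod_congr rfl fun i hi => abs_of_nonneg ?_
          simp only [hTb, Finset.mem_filter, not_lt] at hi
          exact le_trans hρ.le (hbig i hi.2)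
        have hTbB : (∏ i ∈ Tb, a i) * ρ ^ (d - Tb.card) ≤ B := by
          have hstep1 : ρ ^ (d - Tb.card) = ∏ _i ∈ Tstar \ Tb, ρ := by
            rw [Finset.prod_const, Finset.card_sdiff_of_subset hTbsub, hTstar_card]
          have hstep2 : ∏ _i ∈ Tstar \ Tb, ρ ≤ ∏ i ∈ Tstar \ Tb, a i :=
            Finset.prod_le_prod (fun _ _ => hρ.le)
              (fun i hi => hbig i (Finset.mem_filter.mp (Finset.mem_sdiff.mp hi).1).2)
          rw [hBdef, ← Finset.prod_sdiff hTbsub]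
          rw [mul_comm ((∏ i ∈ Tstar \ Tb, a i)) _]
          refine mul_le_mul_of_nonneg_left (le_trans (le_of_eq hstep1) hstep2)
            (Finset.prod_nonneg fun i hi => ?_)
          simp only [hTb, Finset.mem_filter, not_lt] at hi
          exact le_trans hρ.le (hbig i hi.2)
        have hTbpos : 0 ≤ ∏ i ∈ Tb, a i := by
          refine Finset.prod_nonneg fun i hi => ?_
          simp only [hTb, Finset.mem_filter, not_lt] at hi
          exact le_trans hρ.le (hbig i hi.2)
        -- numeric estimate
        set c : ℕ := Ts.card with hc
        set b' : ℕ := Tb.card with hb'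
        have hcb : c + b' ≤ d := hcards ▸ hTd
        have hkcb : k - T.card = s + (d - c - b') := by omega
        have hdb : d - b' = (c - 1) + (d - c - b') + 1 := by omega
        calc (∏ i ∈ T, |a i|) * μ ^ (k - T.card)
            = (∏ i ∈ Ts, |a i|) * ((∏ i ∈ Tb, a i) * μ ^ (k - T.card)) := by
              rw [hsplit, hTbabs]; ring
          _ ≤ (μ * ε ^ (c - 1)) * ((∏ i ∈ Tb, a i) * μ ^ (k - T.card)) := by
              refine mul_le_mul_of_nonneg_right hTsbound ?_
              positivity
          _ = (∏ i ∈ Tb, a i) * (μ * ε ^ (c-1) * μ ^ (d - c - b') * μ ^ s) := by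
              rw [hkcb, pow_add]; ring
          _ ≤ (∏ i ∈ Tb, a i) * (μ * ρ ^ (c-1) * ρ ^ (d - c - b') * μ ^ s) := by
              refine mul_le_mul_of_nonneg_left ?_ hTbpos
              have h1 : ε ^ (c-1) ≤ ρ ^ (c-1) := pow_le_pow_left₀ hεpos.le hερ _
              have h2 : μ ^ (d-c-b') ≤ ρ ^ (d-c-b') := pow_le_pow_left₀ hμpos.le hμρ _
              have := mul_le_mul (mul_le_mul_of_nonneg_left h1 hμpos.le) h2
                (by positivity) (by positivity)
              exact mul_le_mul_of_nonneg_right this (by positivity)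
          _ = (μ / ρ) * ((∏ i ∈ Tb, a i) * ρ ^ (d - b')) * μ ^ s := by
              rw [hdb, pow_add, pow_add, pow_one]
              field_simp
          _ ≤ (μ / ρ) * B * μ ^ s := by
              refine mul_le_mul_of_nonneg_right ?_ (by positivity)
              exact mul_le_mul_of_nonneg_left hTbB (by positivity)
          _ = (μ / ρ) * G := by rw [hG]; ring
      linarith [neg_abs_le ((∏ i ∈ T, a i) * μ ^ (k - T.card)), habs]
    -- lower bound the low part
    have hlow : 0 < ∑ T ∈ S, (∏ i ∈ T, a i) * μ ^ (k - T.card) := by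
      rw [← Finset.sum_filter_add_sum_filter_not S (fun T => ∀ i ∈ T, 0 ≤ a i)]
      have hgood : G ≤ ∑ T ∈ S.filter (fun T => ∀ i ∈ T, 0 ≤ a i),
          (∏ i ∈ T, a i) * μ ^ (k - T.card) := by
        have hTstarS : Tstar ∈ S.filter (fun T => ∀ i ∈ T, 0 ≤ a i) := by
          refine Finset.mem_filter.mpr ⟨Finset.mem_filter.mpr
            ⟨Finset.mem_powerset.mpr (Finset.subset_univ _), le_of_eq hTstar_card⟩,
            fun i hi => le_trans hρ.le (hbig i (Finset.mem_filter.mp hi).2)⟩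
        calc G = (∏ i ∈ Tstar, a i) * μ ^ (k - Tstar.card) := hFstar.symm
          _ ≤ _ := Finset.single_le_sum (f := fun T => (∏ i ∈ T, a i) * μ ^ (k - T.card))
              (fun T hT => mul_nonneg (Finset.prod_nonneg
                (Finset.mem_filter.mp hT).2) (by positivity)) hTstarS
      have hbadsum : -(2 ^ k * ((μ / ρ) * G)) ≤
          ∑ T ∈ S.filter (fun T => ¬ ∀ i ∈ T, 0 ≤ a i),
            (∏ i ∈ T, a i) * μ ^ (k - T.card) := by
        have hcard : (S.filter (fun T => ¬ ∀ i ∈ T, 0 ≤ a i)).card ≤ 2 ^ k := by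
          calc (S.filter (fun T => ¬ ∀ i ∈ T, 0 ≤ a i)).card
              ≤ ((Finset.univ : Finset (Fin k)).powerset).card :=
                Finset.card_le_card (le_trans (Finset.filter_subset _ _)
                  (Finset.filter_subset _ _))
            _ = 2 ^ k := by rw [Finset.card_powerset, hcard_univ]
        calc ∑ T ∈ S.filter (fun T => ¬ ∀ i ∈ T, 0 ≤ a i),
              (∏ i ∈ T, a i) * μ ^ (k - T.card)
            ≥ ∑ _T ∈ S.filter (fun T => ¬ ∀ i ∈ T, 0 ≤ a i), (-((μ / ρ) * G)) := by
              refine Finset.sum_le_sum fun T hT => ?_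
              have hT' := Finset.mem_filter.mp hT
              push_neg at hT'
              obtain ⟨i2, hi2, hi2'⟩ := hT'.2
              exact hbad T hT'.1 ⟨i2, hi2, hi2'⟩
          _ = (S.filter (fun T => ¬ ∀ i ∈ T, 0 ≤ a i)).card * (-((μ / ρ) * G)) := by
              rw [Finset.sum_const, nsmul_eq_mul]
          _ ≥ -(2 ^ k * ((μ / ρ) * G)) := by
              have hX : (0:ℝ) ≤ (μ / ρ) * G := by positivity
              have hc : ((S.filter (fun T => ¬ ∀ i ∈ T, 0 ≤ a i)).card : ℝ) ≤ 2 ^ k := by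
                exact_mod_cast hcard
              nlinarith [mul_le_mul_of_nonneg_right hc hX]
      have hhalf : 2 ^ k * (μ / ρ) ≤ 1 / 2 := by
        have h1 : μ * 2 ^ (k + 1) ≤ ρ := by
          have h := hμε
          rw [hεdef, le_div_iff₀ (by positivity : (0:ℝ) < 2 ^ (k+1))] at h
          linarith
        have h2 : (2:ℝ) ^ (k + 1) = 2 * 2 ^ k := by ring
        have h3 : (2:ℝ) ^ k * (μ / ρ) = 2 ^ k * μ / ρ := by ring
        rw [h3, div_le_iff₀ hρ]
        nlinarith [h1, h2]
      have h4 : 2 ^ k * ((μ / ρ) * G) ≤ G / 2 := by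
        have := mul_le_mul_of_nonneg_right hhalf hGpos.le
        nlinarith [this]
      linarith [hgood, hbadsum, h4, hGpos]
    linarith [key, hhigh, hlow]
end

section
/- Let 0 < δ < ρ be real numbers and let m ∈ ℕ. Then there exists a real polynomial κ in one variable such that: (i) κ(t) ≥ 0 for all t ∈ [−ρ, ρ], and the only zero of κ in [−ρ, ρ] is t = 0; (ii) κ(t) ≤ 1/4^m for all t ∈ [−ρ, 0]; (iii) κ(t) ≥ 2 for all t ∈ [δ, ρ]; (iv) κ(t) ≤ 3 for all t ∈ [0, ρ]. -/
private lemma kappa_pow_third {x : ℝ} {M : ℕ} (hx0 : 0 ≤ x) (hx1 : x ≤ 1)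
    (hMx : 2 ≤ (M : ℝ) * x) : (1 - x) ^ M ≤ 1 / 3 := by
  have h1 : (1 - x) ^ M * (1 + x) ^ M ≤ 1 := by
    rw [← mul_pow]
    apply pow_le_one₀ <;> nlinarith
  have h2 : (3 : ℝ) ≤ (1 + x) ^ M := by
    have := one_add_mul_le_pow (a := x) (by linarith) M
    linarith
  have h3 : (0 : ℝ) ≤ (1 - x) ^ M := pow_nonneg (by linarith) _
  nlinarith

set_option maxHeartbeats 2000000 in
/-- **Lemma.** For `0 < δ < ρ` and `m ∈ ℕ` there is a univariate real polynomial `κ` with: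
`κ ≥ 0` on `[-ρ, ρ]` with `0` as its only zero there, `κ ≤ 1/4^m` on `[-ρ, 0]`,
`κ ≥ 2` on `[δ, ρ]`, and `κ ≤ 3` on `[0, ρ]`. -/
theorem exists_kappa (δ ρ : ℝ) (m : ℕ) (hδ : 0 < δ) (hδρ : δ < ρ) :
    ∃ κ : Polynomial ℝ,
      (∀ t ∈ Set.Icc (-ρ) ρ, 0 ≤ κ.eval t) ∧
      ({t ∈ Set.Icc (-ρ) ρ | κ.eval t = 0} = {0}) ∧
      (∀ t ∈ Set.Icc (-ρ) (0 : ℝ), κ.eval t ≤ 1 / 4 ^ m) ∧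
      (∀ t ∈ Set.Icc δ ρ, 2 ≤ κ.eval t) ∧
      (∀ t ∈ Set.Icc (0 : ℝ) ρ, κ.eval t ≤ 3) := by
  have hρ : 0 < ρ := hδ.trans hδρ
  set a : ℝ := (δ / ρ + 2) / 3 with ha_def
  have hδρ' : 0 < δ / ρ := div_pos hδ hρ
  have hδρ1 : δ / ρ < 1 := (div_lt_one hρ).mpr hδρ
  have ha0 : 0 < a := by positivity
  have ha23 : 2 / 3 < a := by rw [ha_def]; linarith
  have ha1 : a < 1 := by rw [ha_def]; linarith
  set r : ℝ := (2 / 3) / a with hr_def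
  have hr0 : 0 < r := by positivity
  have hr1 : r < 1 := (div_lt_one ha0).mpr ha23
  set c : ℝ := 2 * ρ ^ 2 / δ ^ 2 with hc_def
  have hc0 : 0 < c := by positivity
  set ε : ℝ := (1 / 4 ^ m) / (6 * (c + 1)) with hε_def
  have hε0 : 0 < ε := by positivity
  have hb1 : max (2 / 3 : ℝ) r < 1 := max_lt (by norm_num) hr1
  obtain ⟨N, hN⟩ := exists_pow_lt_of_lt_one hε0 hb1
  have h23N : (2 / 3 : ℝ) ^ N < ε :=
    lt_of_le_of_lt (pow_le_pow_left₀ (by norm_num) (le_max_left _ _) N) hN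
  have hrN : r ^ N < ε :=
    lt_of_le_of_lt (pow_le_pow_left₀ hr0.le (le_max_right _ _) N) hN
  set M : ℕ := ⌈c / a ^ N⌉₊ with hM_def
  have haN0 : (0 : ℝ) < a ^ N := by positivity
  have hM1 : 1 ≤ M := Nat.one_le_iff_ne_zero.mpr (by
    simp only [hM_def, ne_eq, Nat.ceil_eq_zero, not_le]
    positivity)
  have hMge : c / a ^ N ≤ (M : ℝ) := Nat.le_ceil _
  have hMle : (M : ℝ) ≤ c / a ^ N + 1 := (Nat.ceil_lt_add_one (by positivity)).le
  clear_value M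
  clear_value a r c ε
  -- the polynomial
  set P : Polynomial ℝ := (Polynomial.C ρ⁻¹ * Polynomial.X) ^ 2 *
      (Polynomial.C (3 * ρ)⁻¹ * (Polynomial.X + Polynomial.C (2 * ρ))) ^ N with hP_def
  refine ⟨Polynomial.C 3 * (1 - (1 - P) ^ M), ?_⟩
  have hev : ∀ t : ℝ, Polynomial.eval t (Polynomial.C 3 * (1 - (1 - P) ^ M)) =
      3 * (1 - (1 - (ρ⁻¹ * t) ^ 2 * ((3 * ρ)⁻¹ * (t + 2 * ρ)) ^ N) ^ M) := by
    intro t; simp [hP_def]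
  clear_value P
  -- basic facts about p on [-ρ, ρ]
  have hp01 : ∀ t ∈ Set.Icc (-ρ) ρ,
      0 ≤ (ρ⁻¹ * t) ^ 2 * ((3 * ρ)⁻¹ * (t + 2 * ρ)) ^ N ∧
      (ρ⁻¹ * t) ^ 2 * ((3 * ρ)⁻¹ * (t + 2 * ρ)) ^ N ≤ 1 := by
    intro t ht
    obtain ⟨ht1, ht2⟩ := ht
    have hu0 : 0 ≤ (3 * ρ)⁻¹ * (t + 2 * ρ) := by
      have : 0 ≤ t + 2 * ρ := by linarith
      positivity
    have hu1 : (3 * ρ)⁻¹ * (t + 2 * ρ) ≤ 1 := by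
      rw [inv_mul_le_iff₀ (by positivity)]; linarith
    have hs1 : (ρ⁻¹ * t) ^ 2 ≤ 1 := by
      have h1 : ρ⁻¹ * t ≤ 1 := by
        have : ρ⁻¹ * t ≤ ρ⁻¹ * ρ := mul_le_mul_of_nonneg_left ht2 (by positivity)
        simpa [inv_mul_cancel₀ hρ.ne'] using this
      have h2 : -1 ≤ ρ⁻¹ * t := by
        have : ρ⁻¹ * (-ρ) ≤ ρ⁻¹ * t := by
          apply mul_le_mul_of_nonneg_left ht1 (by positivity)
        simpa [inv_mul_cancel₀ hρ.ne'] using this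
      nlinarith
    constructor
    · positivity
    · calc (ρ⁻¹ * t) ^ 2 * ((3 * ρ)⁻¹ * (t + 2 * ρ)) ^ N
          ≤ 1 * 1 := by
            apply mul_le_mul hs1 (pow_le_one₀ hu0 hu1) (by positivity) (by norm_num)
      _ = 1 := by ring
  refine ⟨?_, ?_, ?_, ?_, ?_⟩
  · -- nonneg
    intro t ht
    rw [hev]
    obtain ⟨hp0, hp1⟩ := hp01 t ht
    have : (1 - (ρ⁻¹ * t) ^ 2 * ((3 * ρ)⁻¹ * (t + 2 * ρ)) ^ N) ^ M ≤ 1 :=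
      pow_le_one₀ (by linarith) (by linarith)
    linarith
  · -- zero set
    ext t
    simp only [Set.mem_setOf_eq, Set.mem_singleton_iff, Set.mem_Icc]
    constructor
    · rintro ⟨⟨ht1, ht2⟩, hz⟩
      rw [hev] at hz
      by_contra ht0
      obtain ⟨hp0, hp1⟩ := hp01 t ⟨ht1, ht2⟩
      have hu0 : 0 < (3 * ρ)⁻¹ * (t + 2 * ρ) := by
        have : 0 < t + 2 * ρ := by linarith
        positivity
      have hs0 : 0 < (ρ⁻¹ * t) ^ 2 := by
        have : ρ⁻¹ * t ≠ 0 := by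
          simp only [mul_ne_zero_iff]
          exact ⟨inv_ne_zero hρ.ne', ht0⟩
        positivity
      have hppos : 0 < (ρ⁻¹ * t) ^ 2 * ((3 * ρ)⁻¹ * (t + 2 * ρ)) ^ N := by positivity
      have hlt : (1 - (ρ⁻¹ * t) ^ 2 * ((3 * ρ)⁻¹ * (t + 2 * ρ)) ^ N) ^ M < 1 :=
        pow_lt_one₀ (by linarith) (by linarith) (by omega)
      nlinarith
    · rintro rfl
      refine ⟨⟨by linarith, by linarith⟩, ?_⟩
      rw [hev]
      simp
  · -- ≤ 1/4^m on [-ρ, 0]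
    intro t ht
    obtain ⟨ht1, ht2⟩ := ht
    have htIcc : t ∈ Set.Icc (-ρ) ρ := ⟨ht1, by linarith⟩
    obtain ⟨hp0, hp1⟩ := hp01 t htIcc
    rw [hev]
    set p : ℝ := (ρ⁻¹ * t) ^ 2 * ((3 * ρ)⁻¹ * (t + 2 * ρ)) ^ N with hp_def
    -- p ≤ (2/3)^N
    have hu0 : 0 ≤ (3 * ρ)⁻¹ * (t + 2 * ρ) := by
      have : 0 ≤ t + 2 * ρ := by linarith
      positivity
    have hu23 : (3 * ρ)⁻¹ * (t + 2 * ρ) ≤ 2 / 3 := by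
      rw [inv_mul_le_iff₀ (by positivity)]; linarith
    have hs1 : (ρ⁻¹ * t) ^ 2 ≤ 1 := by
      have h1 : ρ⁻¹ * t ≤ 1 := by
        have : ρ⁻¹ * t ≤ ρ⁻¹ * ρ := mul_le_mul_of_nonneg_left (by linarith) (by positivity)
        simpa [inv_mul_cancel₀ hρ.ne'] using this
      have h2 : -1 ≤ ρ⁻¹ * t := by
        have : ρ⁻¹ * (-ρ) ≤ ρ⁻¹ * t := mul_le_mul_of_nonneg_left ht1 (by positivity)
        simpa [inv_mul_cancel₀ hρ.ne'] using this
      nlinarith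
    have hpN : p ≤ (2 / 3) ^ N := by
      calc p ≤ 1 * ((3 * ρ)⁻¹ * (t + 2 * ρ)) ^ N := by
              apply mul_le_mul_of_nonneg_right hs1 (by positivity)
        _ = ((3 * ρ)⁻¹ * (t + 2 * ρ)) ^ N := one_mul _
        _ ≤ (2 / 3) ^ N := pow_le_pow_left₀ hu0 hu23 N
    -- Bernoulli: (1 - p)^M ≥ 1 - M p
    have hbern : 1 - (M : ℝ) * p ≤ (1 - p) ^ M := by
      have := one_add_mul_le_pow (a := -p) (by linarith) M
      simpa [sub_eq_add_neg, mul_neg] using this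
    have key : 3 * ((M : ℝ) * (2 / 3) ^ N) ≤ 1 / 4 ^ m := by
      have hMb : (M : ℝ) * (2 / 3) ^ N ≤ c * r ^ N + (2 / 3) ^ N := by
        have h1 : (M : ℝ) * (2 / 3) ^ N ≤ (c / a ^ N + 1) * (2 / 3) ^ N :=
          mul_le_mul_of_nonneg_right hMle (by positivity)
        have h2 : (c / a ^ N) * (2 / 3) ^ N = c * r ^ N := by
          rw [hr_def, div_pow, div_pow]
          field_simp
          rw [← mul_pow]; norm_num
        nlinarith
      have : c * r ^ N + (2 / 3) ^ N ≤ c * ε + ε := by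
        have := mul_le_mul_of_nonneg_left hrN.le hc0.le
        linarith
      have hεe : 6 * (c + 1) * ε = 1 / 4 ^ m := by
        rw [hε_def]; field_simp
      nlinarith
    have hMp : (M : ℝ) * p ≤ (M : ℝ) * (2 / 3) ^ N :=
      mul_le_mul_of_nonneg_left hpN (by positivity)
    linarith
  · -- ≥ 2 on [δ, ρ]
    intro t ht
    obtain ⟨ht1, ht2⟩ := ht
    have htIcc : t ∈ Set.Icc (-ρ) ρ := ⟨by linarith, ht2⟩
    obtain ⟨hp0, hp1⟩ := hp01 t htIcc
    rw [hev]
    set p : ℝ := (ρ⁻¹ * t) ^ 2 * ((3 * ρ)⁻¹ * (t + 2 * ρ)) ^ N with hp_def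
    set x : ℝ := (δ / ρ) ^ 2 * a ^ N with hx_def
    have hx0 : 0 < x := by positivity
    have hxp : x ≤ p := by
      have hs : δ / ρ ≤ ρ⁻¹ * t := by
        rw [div_eq_inv_mul]
        exact mul_le_mul_of_nonneg_left ht1 (by positivity)
      have hs2 : (δ / ρ) ^ 2 ≤ (ρ⁻¹ * t) ^ 2 := by
        apply pow_le_pow_left₀ (by positivity) hs
      have hua : a ≤ (3 * ρ)⁻¹ * (t + 2 * ρ) := by
        have key : 3 * ρ * ((δ / ρ + 2) / 3) = δ + 2 * ρ := by
          field_simp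
        rw [ha_def, le_inv_mul_iff₀ (by positivity : (0:ℝ) < 3 * ρ), key]
        linarith
      have huaN : a ^ N ≤ ((3 * ρ)⁻¹ * (t + 2 * ρ)) ^ N :=
        pow_le_pow_left₀ ha0.le hua N
      calc x ≤ (ρ⁻¹ * t) ^ 2 * a ^ N :=
            mul_le_mul_of_nonneg_right hs2 (by positivity)
        _ ≤ p := mul_le_mul_of_nonneg_left huaN (by positivity)
    have hMx : 2 ≤ (M : ℝ) * x := by
      have : (c / a ^ N) * x ≤ (M : ℝ) * x :=
        mul_le_mul_of_nonneg_right hMge hx0.le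
      have hcx : (c / a ^ N) * x = 2 := by
        rw [hc_def, hx_def, div_pow]
        field_simp
        try ring
      linarith
    have hpow : (1 - p) ^ M ≤ (1 - x) ^ M :=
      pow_le_pow_left₀ (by linarith) (by linarith) M
    have hthird : (1 - x) ^ M ≤ 1 / 3 := kappa_pow_third hx0.le (by linarith) hMx
    linarith
  · -- ≤ 3 on [0, ρ]
    intro t ht
    obtain ⟨ht1, ht2⟩ := ht
    have htIcc : t ∈ Set.Icc (-ρ) ρ := ⟨by linarith, ht2⟩
    obtain ⟨hp0, hp1⟩ := hp01 t htIcc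
    rw [hev]
    have : 0 ≤ (1 - (ρ⁻¹ * t) ^ 2 * ((3 * ρ)⁻¹ * (t + 2 * ρ)) ^ N) ^ M := by
      apply pow_nonneg; linarith
    linarith
end

section
/- Let S ⊆ ℝ^d be a compact set of the form S = {x ∈ ℝ^d : f_1(x) ≥ 0, …, f_k(x) ≥ 0} for real polynomials f_1, …, f_k in d variables, and let T ⊆ ℝ^d be a closed set that is a finite union of basic closed semialgebraic sets, with S ∩ T = ∅. Then there exists a real polynomial p in d variables such that p(x) > 0 for all x ∈ S and p(x) < 0 for all x ∈ T. -/
open MvPolynomial Filter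

/-- Applying `aeval` into continuous functions and then evaluating at a point is `eval`. -/
lemma apply_aeval_cm {d : ℕ} {X : Type*} [TopologicalSpace X]
    (g : Fin d → C(X, ℝ)) (q : MvPolynomial (Fin d) ℝ) (z : X) :
    (MvPolynomial.aeval g q) z = MvPolynomial.eval (fun i => g i z) q := by
  induction q using MvPolynomial.induction_on with
  | C a => simp
  | add p r hp hr => simp [hp, hr]
  | mul_X p i hp => simp [hp]

/-- The squared norm on Euclidean space is a sum of squares of coordinates. -/
lemma normsq_eq {d : ℕ} (x : EuclideanSpace ℝ (Fin d)) :
    ‖x‖ ^ 2 = ∑ i, x i ^ 2 := by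
  rw [EuclideanSpace.norm_eq]
  rw [Real.sq_sqrt (by positivity)]
  simp [sq_abs]

lemma pev_normsq {d : ℕ} (x : EuclideanSpace ℝ (Fin d)) :
    pev (∑ i, (X i : MvPolynomial (Fin d) ℝ) ^ 2) x = ‖x‖ ^ 2 := by
  rw [normsq_eq]
  simp [pev]

lemma abs_coord_le {d : ℕ} (x : EuclideanSpace ℝ (Fin d)) (i : Fin d) :
    |x i| ≤ ‖x‖ := by
  have h1 : x i ^ 2 ≤ ‖x‖ ^ 2 := by
    rw [normsq_eq]
    exact Finset.single_le_sum (f := fun j => x j ^ 2)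
      (fun j _ => sq_nonneg _) (Finset.mem_univ i)
  calc |x i| = Real.sqrt (x i ^ 2) := (Real.sqrt_sq_eq_abs _).symm
    _ ≤ Real.sqrt (‖x‖ ^ 2) := Real.sqrt_le_sqrt h1
    _ = ‖x‖ := by rw [Real.sqrt_sq (norm_nonneg _)]

/-- Polynomial growth bound: `|pev q x| ≤ A · (1 + ‖x‖²)^m`. -/
lemma pev_growth {d : ℕ} (q : MvPolynomial (Fin d) ℝ) (x : EuclideanSpace ℝ (Fin d)) :
    |pev q x| ≤ (∑ s ∈ q.support, |q.coeff s|) * (1 + ‖x‖ ^ 2) ^ q.totalDegree := by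
  set u : ℝ := 1 + ‖x‖ ^ 2 with hu
  have hu1 : (1 : ℝ) ≤ u := by nlinarith [sq_nonneg ‖x‖]
  have hxu : ∀ i, |x i| ≤ u := by
    intro i
    refine (abs_coord_le x i).trans ?_
    nlinarith [norm_nonneg x, sq_nonneg (‖x‖ - 1)]
  rw [pev, eval_eq]
  refine (Finset.abs_sum_le_sum_abs _ _).trans ?_
  rw [Finset.sum_mul]
  refine Finset.sum_le_sum fun s hs => ?_
  rw [abs_mul, Finset.abs_prod]
  refine mul_le_mul_of_nonneg_left ?_ (abs_nonneg _)
  calc ∏ i ∈ s.support, |x i ^ s i|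
      ≤ ∏ i ∈ s.support, u ^ s i := by
        refine Finset.prod_le_prod (fun i _ => abs_nonneg _) fun i _ => ?_
        rw [abs_pow]
        exact pow_le_pow_left₀ (abs_nonneg _) (hxu i) _
    _ = u ^ (∑ i ∈ s.support, s i) := Finset.prod_pow_eq_pow_sum _ _ _
    _ ≤ u ^ q.totalDegree := by
        refine pow_le_pow_right₀ hu1 ?_
        exact MvPolynomial.le_totalDegree hs

lemma pev_sub_pen {d : ℕ} (q : MvPolynomial (Fin d) ℝ) (c : ℝ) (M : ℕ)
    (x : EuclideanSpace ℝ (Fin d)) :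
    pev (q - MvPolynomial.C c * (∑ i, (X i : MvPolynomial (Fin d) ℝ) ^ 2) ^ M) x
      = pev q x - c * (‖x‖ ^ 2) ^ M := by
  have h := pev_normsq x
  simp only [pev] at h ⊢
  rw [map_sub, map_mul, map_pow, eval_C, h]

lemma pev_C {d : ℕ} (c : ℝ) (x : EuclideanSpace ℝ (Fin d)) :
    pev (MvPolynomial.C c) x = c := by simp [pev]

/-- Arithmetic for the "near" (on `S`) estimate. -/
lemma arith_pos_near (R c₀ e w : ℝ) (M : ℕ) (hR1 : 1 ≤ R) (hc₀ : 0 < c₀)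
    (hc₀M : c₀ < 4 ^ M) (hw0 : 0 ≤ w) (hw : w ≤ R ^ 2) (he : 3/2 ≤ e) :
    0 < e - c₀ / (4 * R ^ 2) ^ M * w ^ M := by
  have hR0 : (0:ℝ) < R := lt_of_lt_of_le one_pos hR1
  have hD : (0:ℝ) < (4 * R ^ 2) ^ M := by positivity
  have h1 : c₀ / (4 * R ^ 2) ^ M * w ^ M ≤ c₀ / (4 * R ^ 2) ^ M * (R ^ 2) ^ M := by
    refine mul_le_mul_of_nonneg_left (pow_le_pow_left₀ hw0 hw M) (by positivity)
  have h2 : c₀ / (4 * R ^ 2) ^ M * (R ^ 2) ^ M = c₀ / 4 ^ M := by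
    rw [mul_pow]
    field_simp
  have h3 : c₀ / 4 ^ M < 1 := by
    rw [div_lt_one (by positivity)]
    exact hc₀M
  linarith

/-- Arithmetic for the "far" (outside the big ball) estimate. -/
lemma arith_neg_far (A₀ R e w : ℝ) (m M : ℕ) (hA₀ : 0 ≤ A₀) (hR1 : 1 ≤ R)
    (hmM : m ≤ M) (hw : 4 * R ^ 2 < w) (he : e ≤ A₀ * (1 + w) ^ m) :
    e - (A₀ * 2 ^ m + 1) * (4 * R ^ 2) ^ m / (4 * R ^ 2) ^ M * w ^ M < 0 := by
  have hR0 : (0:ℝ) < R := lt_of_lt_of_le one_pos hR1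
  have h4R2 : (1:ℝ) ≤ 4 * R ^ 2 := by nlinarith
  have hw1 : (1:ℝ) ≤ w := by linarith
  have hD : (0:ℝ) < (4 * R ^ 2) ^ M := by positivity
  have hgrow : e ≤ A₀ * 2 ^ m * w ^ m := by
    have h2 : (1 + w) ^ m ≤ (2 * w) ^ m :=
      pow_le_pow_left₀ (by linarith) (by linarith) m
    calc e ≤ A₀ * (1 + w) ^ m := he
      _ ≤ A₀ * (2 * w) ^ m := mul_le_mul_of_nonneg_left h2 hA₀
      _ = A₀ * 2 ^ m * w ^ m := by rw [mul_pow]; ring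
  have hkey : (4 * R ^ 2) ^ M * w ^ m ≤ (4 * R ^ 2) ^ m * w ^ M := by
    obtain ⟨t, ht⟩ : ∃ t, M = m + t := ⟨M - m, (Nat.add_sub_cancel' hmM).symm⟩
    have h1 : (4 * R ^ 2) ^ t ≤ w ^ t := pow_le_pow_left₀ (by positivity) hw.le t
    have h2 : (0:ℝ) ≤ (4 * R ^ 2) ^ m * w ^ m := by positivity
    calc (4 * R ^ 2) ^ M * w ^ m = ((4 * R ^ 2) ^ m * w ^ m) * (4 * R ^ 2) ^ t := by
          rw [ht, pow_add]; ring
      _ ≤ ((4 * R ^ 2) ^ m * w ^ m) * w ^ t := mul_le_mul_of_nonneg_left h1 h2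
      _ = (4 * R ^ 2) ^ m * w ^ M := by rw [ht, pow_add]; ring
  have hpen : (A₀ * 2 ^ m + 1) * w ^ m
      ≤ (A₀ * 2 ^ m + 1) * (4 * R ^ 2) ^ m / (4 * R ^ 2) ^ M * w ^ M := by
    rw [div_mul_eq_mul_div, le_div_iff₀ hD]
    calc (A₀ * 2 ^ m + 1) * w ^ m * (4 * R ^ 2) ^ M
        = (A₀ * 2 ^ m + 1) * ((4 * R ^ 2) ^ M * w ^ m) := by ring
      _ ≤ (A₀ * 2 ^ m + 1) * ((4 * R ^ 2) ^ m * w ^ M) := by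
          refine mul_le_mul_of_nonneg_left hkey ?_
          positivity
      _ = (A₀ * 2 ^ m + 1) * (4 * R ^ 2) ^ m * w ^ M := by ring
  have hwm1 : (1:ℝ) ≤ w ^ m := one_le_pow₀ hw1
  nlinarith [hgrow, hpen, hwm1]

/-- **Proposition (Separation of disjoint closed sets).** Let `S ⊆ ℝ^d` be compact and
basic closed, and let `T ⊆ ℝ^d` be a closed semialgebraic set disjoint from `S`. Then there
is a polynomial `p` with `p > 0` on `S` and `p < 0` on `T`. -/
theorem separation_of_disjoint_closed_sets {d k : ℕ}
    (S T : Set (EuclideanSpace ℝ (Fin d)))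
    (f : Fin k → MvPolynomial (Fin d) ℝ)
    (hS : S = {x | ∀ i, 0 ≤ pev (f i) x})
    (hScpt : IsCompact S)
    (hTclosed : IsClosed T)
    (hTsa : IsClosedSemialg T)
    (hdisj : S ∩ T = ∅) :
    ∃ p : MvPolynomial (Fin d) ℝ,
      (∀ x ∈ S, 0 < pev p x) ∧ (∀ x ∈ T, pev p x < 0) := by
  classical
  -- trivial cases
  rcases S.eq_empty_or_nonempty with hSe | hSne
  · refine ⟨MvPolynomial.C (-1), ?_, ?_⟩
    · intro x hx; rw [hSe] at hx; exact absurd hx (Set.notMem_empty x)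
    · intro x _; rw [pev_C]; norm_num
  rcases T.eq_empty_or_nonempty with hTe | hTne
  · refine ⟨MvPolynomial.C 1, ?_, ?_⟩
    · intro x _; rw [pev_C]; norm_num
    · intro x hx; rw [hTe] at hx; exact absurd hx (Set.notMem_empty x)
  have hdisj' : ∀ x, x ∈ S → x ∉ T := by
    intro x hxS hxT
    have : x ∈ S ∩ T := ⟨hxS, hxT⟩
    rw [hdisj] at this; exact this
  -- a radius bound for S
  obtain ⟨R₀, hR₀⟩ := hScpt.isBounded.subset_closedBall 0
  set R : ℝ := max R₀ 1 with hRdef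
  have hR1 : (1 : ℝ) ≤ R := le_max_right _ _
  have hR0 : (0 : ℝ) < R := lt_of_lt_of_le one_pos hR1
  have hSR : ∀ x ∈ S, ‖x‖ ≤ R := by
    intro x hx
    have := hR₀ hx
    rw [Metric.mem_closedBall, dist_zero_right] at this
    exact this.trans (le_max_left _ _)
  set K : Set (EuclideanSpace ℝ (Fin d)) := Metric.closedBall 0 (2 * R) with hKdef
  have hKcpt : IsCompact K := isCompact_closedBall _ _
  have hSK : S ⊆ K := by
    intro x hx
    rw [hKdef, Metric.mem_closedBall, dist_zero_right]
    nlinarith [hSR x hx]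
  -- the continuous function to approximate
  set dS : EuclideanSpace ℝ (Fin d) → ℝ := fun x => Metric.infDist x S with hdS
  set dT : EuclideanSpace ℝ (Fin d) → ℝ := fun x => Metric.infDist x T with hdT
  have hden : ∀ x, 0 < dS x + dT x := by
    intro x
    by_cases hx : x ∈ S
    · have hxT : x ∉ T := hdisj' x hx
      have h1 : 0 < dT x := (hTclosed.notMem_iff_infDist_pos hTne).mp hxT
      have h2 : 0 ≤ dS x := Metric.infDist_nonneg
      linarith
    · have h1 : 0 < dS x := (hScpt.isClosed.notMem_iff_infDist_pos hSne).mp hx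
      have h2 : 0 ≤ dT x := Metric.infDist_nonneg
      linarith
  set F : EuclideanSpace ℝ (Fin d) → ℝ := fun x => 2 - 4 * dS x / (dS x + dT x) with hF
  have hFcont : Continuous F := by
    refine continuous_const.sub ?_
    exact (continuous_const.mul (Metric.continuous_infDist_pt S)).div
      ((Metric.continuous_infDist_pt S).add (Metric.continuous_infDist_pt T))
      (fun x => (hden x).ne')
  have hFS : ∀ x ∈ S, F x = 2 := by
    intro x hx
    have h0 : dS x = 0 := Metric.infDist_zero_of_mem hx
    simp [hF, h0]
  have hFT : ∀ x ∈ T, F x = -2 := by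
    intro x hx
    have h0 : dT x = 0 := Metric.infDist_zero_of_mem hx
    have h1 : dS x ≠ 0 := by
      have := hden x; rw [h0] at this; linarith
    show 2 - 4 * dS x / (dS x + dT x) = -2
    rw [h0, add_zero, mul_div_assoc, div_self h1]
    norm_num
  -- Stone–Weierstrass on K
  set coord : Fin d → C(K, ℝ) := fun i =>
    ⟨fun z => (z : EuclideanSpace ℝ (Fin d)) i,
      (EuclideanSpace.proj (𝕜 := ℝ) i).continuous.comp continuous_subtype_val⟩ with hcoord
  set φ : MvPolynomial (Fin d) ℝ →ₐ[ℝ] C(K, ℝ) := MvPolynomial.aeval coord with hφdef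
  set A : Subalgebra ℝ C(K, ℝ) := φ.range with hA
  have hAsep : A.SeparatesPoints := by
    intro z w hzw
    have h1 : (z : EuclideanSpace ℝ (Fin d)) ≠ (w : EuclideanSpace ℝ (Fin d)) :=
      fun h => hzw (Subtype.ext h)
    have h2 : ∃ i, (z : EuclideanSpace ℝ (Fin d)) i ≠ (w : EuclideanSpace ℝ (Fin d)) i := by
      by_contra hcon
      push_neg at hcon
      exact h1 (PiLp.ext hcon)
    obtain ⟨i, hi⟩ := h2
    have hmem : coord i ∈ A := by
      rw [hA]
      have : φ (MvPolynomial.X i) = coord i := by simp [hφdef]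
      exact (AlgHom.mem_range φ).mpr ⟨MvPolynomial.X i, this⟩
    refine ⟨⇑(coord i), ⟨coord i, hmem, rfl⟩, ?_⟩
    exact hi
  haveI : CompactSpace K := isCompact_iff_compactSpace.mp hKcpt
  obtain ⟨g, hg⟩ := ContinuousMap.exists_mem_subalgebra_near_continuous_of_separatesPoints
    A hAsep (fun z : K => F z) (hFcont.comp continuous_subtype_val) (1/2) (by norm_num)
  obtain ⟨q, hq⟩ := (AlgHom.mem_range φ).mp g.2
  have hgq : ∀ z : K, (g : K → ℝ) z = pev q (z : EuclideanSpace ℝ (Fin d)) := by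
    intro z
    rw [← hq]
    show (MvPolynomial.aeval coord q) z = _
    rw [apply_aeval_cm]
    rfl
  have hqS : ∀ x ∈ S, (3:ℝ)/2 ≤ pev q x := by
    intro x hx
    have hz := hg ⟨x, hSK hx⟩
    rw [hgq ⟨x, hSK hx⟩] at hz
    rw [hFS x hx] at hz
    rw [Real.norm_eq_abs, abs_lt] at hz
    simp only at hz
    linarith [hz.1]
  have hqT : ∀ x, x ∈ T → x ∈ K → pev q x ≤ -(3:ℝ)/2 := by
    intro x hxT hxK
    have hz := hg ⟨x, hxK⟩
    rw [hgq ⟨x, hxK⟩] at hz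
    rw [hFT x hxT] at hz
    rw [Real.norm_eq_abs, abs_lt] at hz
    simp only at hz
    linarith [hz.2]
  -- constants
  set A₀ : ℝ := ∑ s ∈ q.support, |q.coeff s| with hA₀
  have hA₀0 : 0 ≤ A₀ := Finset.sum_nonneg fun s _ => abs_nonneg _
  set m : ℕ := q.totalDegree with hm
  set c₀ : ℝ := (A₀ * 2 ^ m + 1) * (4 * R ^ 2) ^ m with hc₀
  have h4R2 : (1:ℝ) ≤ 4 * R ^ 2 := by nlinarith
  have hc₀0 : 0 < c₀ := by positivity
  obtain ⟨M₀, hM₀⟩ := pow_unbounded_of_one_lt c₀ (by norm_num : (1:ℝ) < 4)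
  set M : ℕ := max m M₀ with hM
  have hmM : m ≤ M := le_max_left _ _
  have hc₀M : c₀ < 4 ^ M :=
    hM₀.trans_le (pow_le_pow_right₀ (by norm_num) (le_max_right _ _))
  -- the separating polynomial
  refine ⟨q - MvPolynomial.C (c₀ / (4 * R ^ 2) ^ M) *
      (∑ i, (X i : MvPolynomial (Fin d) ℝ) ^ 2) ^ M, ?_, ?_⟩
  · -- positive on S
    intro x hx
    rw [pev_sub_pen]
    have hw : ‖x‖ ^ 2 ≤ R ^ 2 := by
      have h1 := hSR x hx
      have h2 := norm_nonneg x
      nlinarith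
    exact arith_pos_near R c₀ (pev q x) (‖x‖ ^ 2) M hR1 hc₀0 hc₀M (by positivity) hw
      (hqS x hx)
  · -- negative on T
    intro x hx
    rw [pev_sub_pen]
    by_cases hxK : x ∈ K
    · have h1 := hqT x hx hxK
      have h2 : 0 ≤ c₀ / (4 * R ^ 2) ^ M * (‖x‖ ^ 2) ^ M := by positivity
      linarith
    · have hxfar : 2 * R < ‖x‖ := by
        rw [hKdef, Metric.mem_closedBall, dist_zero_right] at hxK
        linarith [not_le.mp hxK]
      have hw4 : 4 * R ^ 2 < ‖x‖ ^ 2 := by nlinarith [hR0]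
      have he : pev q x ≤ A₀ * (1 + ‖x‖ ^ 2) ^ m := by
        have h1 := pev_growth q x
        rw [← hA₀, ← hm] at h1
        exact (le_abs_self _).trans h1
      rw [hc₀]
      exact arith_neg_far A₀ R (pev q x) (‖x‖ ^ 2) m M hA₀0 hR1 hmM hw4 he
end

section
/- Let S ⊆ ℝ^d be a d-dimensional polytope, and for every facet F of S (i.e., every face of dimension d−1) let ℓ_F be an affine function on ℝ^d with ℓ_F ≥ 0 on S and F = S ∩ {ℓ_F = 0}. Then for every y ∈ S there exists a vertex x of S (i.e., an extreme point of S) such that ℓ_F(y) > 0 for every facet F of S with x ∉ F. -/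
open MvPolynomial Filter

/-- For every point `y` of a `d`-dimensional polytope `S ⊆ ℝ^d` there is a vertex `x` of
`S` such that `ℓ_F(y) > 0` for every facet `F` of `S` not containing `x`, where `ℓ_F` is
an affine function with `ℓ_F ≥ 0` on `S` and `F = S ∩ {ℓ_F = 0}`. -/
theorem exists_vertex_positive_on_opposite_facets {d : ℕ}
    (S : Set (EuclideanSpace ℝ (Fin d)))
    (hpoly : IsPolyhedron S)
    (hbdd : Bornology.IsBounded S)
    (hdim : affineSpan ℝ S = ⊤)
    (ℓ : Set (EuclideanSpace ℝ (Fin d)) → (EuclideanSpace ℝ (Fin d) →ᵃ[ℝ] ℝ))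
    (hℓ : ∀ F : Set (EuclideanSpace ℝ (Fin d)), IsFace S F → sDim F = d - 1 →
      (∀ x ∈ S, 0 ≤ ℓ F x) ∧ F = {x ∈ S | ℓ F x = 0}) :
    ∀ y ∈ S, ∃ x ∈ Set.extremePoints ℝ S,
      ∀ F : Set (EuclideanSpace ℝ (Fin d)), IsFace S F → sDim F = d - 1 →
        x ∉ F → 0 < ℓ F y := by
  intro y hy
  classical
  -- S is closed
  obtain ⟨k, l, hSl⟩ := hpoly
  have hScl : IsClosed S := by
    rw [hSl, Set.setOf_forall]
    exact isClosed_iInter fun i =>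
      isClosed_le continuous_const (l i).continuous_of_finiteDimensional
  -- the collection of facets containing y
  set 𝒮 : Set (Set (EuclideanSpace ℝ (Fin d))) :=
    {F | IsFace S F ∧ sDim F = d - 1 ∧ y ∈ F} with h𝒮
  set T : Set (EuclideanSpace ℝ (Fin d)) := S ∩ ⋂ F ∈ 𝒮, F with hT
  have hTy : y ∈ T := ⟨hy, Set.mem_biInter fun F hF => hF.2.2⟩
  -- each facet is closed
  have hFcl : ∀ F ∈ 𝒮, IsClosed F := by
    intro F hF
    have hFeq := (hℓ F hF.1 hF.2.1).2
    rw [hFeq]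
    exact hScl.inter (isClosed_eq (ℓ F).continuous_of_finiteDimensional continuous_const)
      |>.mono (by rfl) |>.mono (by rfl)
  have hTcl : IsClosed T := hScl.inter (isClosed_biInter hFcl)
  have hTcomp : IsCompact T :=
    Metric.isCompact_of_isClosed_isBounded hTcl (hbdd.subset Set.inter_subset_left)
  obtain ⟨x, hx⟩ := hTcomp.extremePoints_nonempty ⟨y, hTy⟩
  -- T is an extreme subset of S
  have hext : IsExtreme ℝ S T := by
    constructor
    · exact Set.inter_subset_left
    · intro x₁ hx₁ x₂ hx₂ z hz hzseg
      obtain ⟨a, b, ha, hb, hab, habz⟩ := hzseg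
      have key : ∀ F ∈ 𝒮, x₁ ∈ F ∧ x₂ ∈ F := by
        intro F hF
        obtain ⟨hnn, hFeq⟩ := hℓ F hF.1 hF.2.1
        have hzF : z ∈ F := Set.mem_iInter₂.1 hz.2 F hF
        have hz0 : ℓ F z = 0 := (hFeq ▸ hzF).2
        have h1 : (0:ℝ) ≤ ℓ F x₁ := hnn _ hx₁
        have h2 : (0:ℝ) ≤ ℓ F x₂ := hnn _ hx₂
        have hcombo : a * ℓ F x₁ + b * ℓ F x₂ = 0 := by
          have := Convex.combo_affine_apply (f := ℓ F) (x := x₁) (y := x₂) hab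
          rw [habz, hz0] at this
          simpa [smul_eq_mul] using this.symm
        have h1' : ℓ F x₁ = 0 := by nlinarith
        have h2' : ℓ F x₂ = 0 := by nlinarith
        exact ⟨hFeq ▸ ⟨hx₁, h1'⟩, hFeq ▸ ⟨hx₂, h2'⟩⟩
      exact ⟨hx₁, Set.mem_biInter fun F hF => (key F hF).1⟩
  refine ⟨x, hext.extremePoints_subset_extremePoints hx, ?_⟩
  intro F hFface hFdim hxF
  obtain ⟨hnn, hFeq⟩ := hℓ F hFface hFdim
  rcases (hnn y hy).lt_or_eq with h | h
  · exact h
  · exfalso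
    have hyF : y ∈ F := hFeq ▸ ⟨hy, h.symm⟩
    exact hxF (Set.mem_iInter₂.1 hx.1.2 F ⟨hFface, hFdim, hyF⟩)
end
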